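/- arXiv:2401.03906 — 8 statements merged into one kernel-verified Lean document; each statement's English description precedes it below -/
import Mathlib

section
/- Let d ≥ 3, n, k be positive integers with k ≤ n^(d/(d+1)) / (d·log₂(n+1))^(1/(d+1)). Then (binom(n,k)^d + 1)^(k^d) < 2^(n^d). Consequently, the map sending a binary n×…×n (d-dimensional) hypermatrix A to S_k(A) (the entrywise sum of all its k×…×k subhypermatrices) is not injective: there exist distinct hypermatrices A ≠ A' with S_k(A) = S_k(A'). -/
/-- The entrywise sum of all `k × ⋯ × k` subhypermatrices of a binary
`n × ⋯ × n` `d`-dimensional hypermatrix `A`. -/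
def Sk (d n k : ℕ) (A : (Fin d → Fin n) → Bool) : (Fin d → Fin k) → ℕ :=
  fun u => ∑ σ : Fin d → {s : Finset (Fin n) // s.card = k},
    (A (fun j => ((σ j).1.orderIsoOfFin (σ j).2 (u j) : Fin n))).toNat

lemma aux_pow (n m : ℕ) (hn : 1 ≤ n) : n ^ m + m ≤ (n + 1) ^ m := by
  induction m with
  | zero => simp
  | succ m ih =>
    have h1 : 1 ≤ n ^ m := Nat.one_le_pow _ _ hn
    calc n ^ (m + 1) + (m + 1) = n ^ m * n + m + 1 := by ring
      _ ≤ (n ^ m + m) * (n + 1) := by nlinarith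
      _ ≤ (n + 1) ^ m * (n + 1) := Nat.mul_le_mul_right _ ih
      _ = (n + 1) ^ (m + 1) := by ring

theorem stmt0 (d n k : ℕ) (hd : 3 ≤ d) (hn : 0 < n) (hk : 0 < k)
    (hkb : (k : ℝ) ≤ (n : ℝ) ^ ((d : ℝ) / ((d : ℝ) + 1)) /
      ((d : ℝ) * Real.logb 2 ((n : ℝ) + 1)) ^ (1 / ((d : ℝ) + 1))) :
    ((Nat.choose n k) ^ d + 1) ^ (k ^ d) < 2 ^ (n ^ d) ∧
      ¬ Function.Injective (Sk d n k) := by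
  set L : ℝ := Real.logb 2 ((n : ℝ) + 1) with hLdef
  have hn1 : (2 : ℝ) ≤ (n : ℝ) + 1 := by
    have : (1 : ℝ) ≤ n := by exact_mod_cast hn
    linarith
  have hL1 : (1 : ℝ) ≤ L := by
    have := Real.logb_le_logb_of_le (b := 2) (x := 2) (y := (n : ℝ) + 1)
      (by norm_num) (by norm_num) hn1
    simpa using this
  have hd0 : (0 : ℝ) < d := by positivity
  have hdL : (0 : ℝ) < (d : ℝ) * L := by nlinarith
  have hd1 : ((d : ℝ) + 1) ≠ 0 := by positivity
  have hB : (0 : ℝ) < ((d : ℝ) * L) ^ (1 / ((d : ℝ) + 1)) :=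
    Real.rpow_pos_of_pos hdL _
  have hkB : (k : ℝ) * ((d : ℝ) * L) ^ (1 / ((d : ℝ) + 1)) ≤
      (n : ℝ) ^ ((d : ℝ) / ((d : ℝ) + 1)) := by
    rwa [← le_div_iff₀ hB]
  -- key real inequality : d * k^(d+1) * L ≤ n^d
  have hkey : (d : ℝ) * (k : ℝ) ^ (d + 1) * L ≤ (n : ℝ) ^ d := by
    have hnn : (0 : ℝ) ≤ (k : ℝ) * ((d : ℝ) * L) ^ (1 / ((d : ℝ) + 1)) := by positivity
    have h2 := Real.rpow_le_rpow hnn hkB (le_of_lt (by positivity : (0:ℝ) < (d:ℝ)+1))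
    rw [Real.mul_rpow (by positivity) (le_of_lt hB)] at h2
    have hBpow : (((d:ℝ)*L) ^ (1/((d:ℝ)+1))) ^ ((d:ℝ)+1) = (d:ℝ)*L := by
      rw [← Real.rpow_mul (le_of_lt hdL), one_div_mul_cancel hd1, Real.rpow_one]
    have hApow : ((n:ℝ) ^ ((d:ℝ)/((d:ℝ)+1))) ^ ((d:ℝ)+1) = (n:ℝ) ^ (d:ℝ) := by
      rw [← Real.rpow_mul (by positivity), div_mul_cancel₀ _ hd1]
    have hkpow : (k:ℝ) ^ ((d:ℝ)+1) = (k:ℝ) ^ (d+1 : ℕ) := by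
      rw [← Real.rpow_natCast (k:ℝ) (d+1)]; push_cast; ring_nf
    rw [hBpow, hApow, hkpow, Real.rpow_natCast] at h2
    linarith
  -- nat inequality : (n+1)^(d*k^(d+1)) ≤ 2^(n^d)
  have hnat : ((n + 1 : ℕ)) ^ (d * k ^ (d + 1)) ≤ 2 ^ (n ^ d) := by
    have hreal : ((n + 1 : ℕ) : ℝ) ^ (d * k ^ (d + 1)) ≤ (2 : ℝ) ^ (n ^ d) := by
      have hexp : ((n + 1 : ℕ) : ℝ) = (2 : ℝ) ^ L := by
        rw [hLdef, Real.rpow_logb (by norm_num) (by norm_num) (by positivity)]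
        push_cast; ring
      calc ((n + 1 : ℕ) : ℝ) ^ (d * k ^ (d + 1))
          = ((2 : ℝ) ^ L) ^ ((d * k ^ (d + 1) : ℕ) : ℝ) := by
            rw [hexp, Real.rpow_natCast]
        _ = (2 : ℝ) ^ (L * ((d * k ^ (d + 1) : ℕ) : ℝ)) := by
            rw [← Real.rpow_mul (by norm_num)]
        _ ≤ (2 : ℝ) ^ (((n ^ d : ℕ) : ℝ)) := by
            apply Real.rpow_le_rpow_of_exponent_le (by norm_num)
            push_cast
            nlinarith
        _ = (2 : ℝ) ^ (n ^ d) := Real.rpow_natCast 2 _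
    exact_mod_cast hreal
  -- strict part
  have hkd : 3 ≤ k * d := le_trans hd (Nat.le_mul_of_pos_left d hk)
  have hstep : Nat.choose n k ^ d + 1 < (n + 1) ^ (k * d) := by
    have h1 : Nat.choose n k ^ d ≤ n ^ (k * d) := by
      rw [pow_mul]
      exact Nat.pow_le_pow_left (Nat.choose_le_pow n k) d
    have h2 := aux_pow n (k * d) hn
    omega
  have hlt : ((Nat.choose n k) ^ d + 1) ^ (k ^ d) < 2 ^ (n ^ d) := by
    calc ((Nat.choose n k) ^ d + 1) ^ (k ^ d)
        < ((n + 1) ^ (k * d)) ^ (k ^ d) :=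
          Nat.pow_lt_pow_left hstep (pow_ne_zero d hk.ne')
      _ = (n + 1) ^ (d * k ^ (d + 1)) := by
          rw [← pow_mul]; ring_nf
      _ ≤ 2 ^ (n ^ d) := hnat
  refine ⟨hlt, ?_⟩
  intro hinj
  have hbound : ∀ A u, Sk d n k A u < Nat.choose n k ^ d + 1 := by
    intro A u
    have h1 : Sk d n k A u ≤ Nat.choose n k ^ d := by
      unfold Sk
      calc (∑ σ : Fin d → {s : Finset (Fin n) // s.card = k},
              (A (fun j => ((σ j).1.orderIsoOfFin (σ j).2 (u j) : Fin n))).toNat)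
          ≤ ∑ _σ : Fin d → {s : Finset (Fin n) // s.card = k}, 1 :=
            Finset.sum_le_sum (fun σ _ => Bool.toNat_le _)
        _ = Fintype.card (Fin d → {s : Finset (Fin n) // s.card = k}) := by
            rw [Finset.sum_const, smul_eq_mul, mul_one, Finset.card_univ]
        _ = Nat.choose n k ^ d := by
            rw [Fintype.card_fun, Fintype.card_finset_len, Fintype.card_fin, Fintype.card_fin]
    omega
  let g : ((Fin d → Fin n) → Bool) → ((Fin d → Fin k) → Fin (Nat.choose n k ^ d + 1)) :=
    fun A u => ⟨Sk d n k A u, hbound A u⟩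
  have hginj : Function.Injective g := by
    intro A A' hAA'
    apply hinj
    funext u
    have := congrFun hAA' u
    exact congrArg Fin.val this
  have hcard := Fintype.card_le_of_injective g hginj
  simp only [Fintype.card_fun, Fintype.card_fin, Fintype.card_bool] at hcard
  exact absurd hcard (not_le.mpr hlt)
end

section
/- Let d ≥ 3, n, k be positive integers with k ≤ n^(d/(d+1)) / (d·log₂(n+1))^(1/(d+1)). Then (binom(n,k) + 1)^(k^d) < 2^(n^d). Consequently, the map sending a binary n^{×d}-hypermatrix A to S_k^p(A) (the entrywise sum of all binom(n,k) principal k^{×d}-subhypermatrices) is not injective. -/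
/-- The entrywise sum of all principal `k × ⋯ × k` subhypermatrices of a binary
`n × ⋯ × n` `d`-dimensional hypermatrix `A` (the same index set deleted in
every coordinate direction). -/
def Skp (d n k : ℕ) (A : (Fin d → Fin n) → Bool) : (Fin d → Fin k) → ℕ :=
  fun u => ∑ s : {s : Finset (Fin n) // s.card = k},
    (A (fun j => (s.1.orderIsoOfFin s.2 (u j) : Fin n))).toNat

theorem stmt1_count_lt (d n k : ℕ) (hd : 3 ≤ d) (hn : 0 < n) (hk : 0 < k)
    (hkb : (k : ℝ) ≤ (n : ℝ) ^ ((d : ℝ) / ((d : ℝ) + 1)) /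
      ((d : ℝ) * Real.logb 2 ((n : ℝ) + 1)) ^ (1 / ((d : ℝ) + 1))) :
    ((Nat.choose n k) + 1) ^ (k ^ d) < 2 ^ (n ^ d) := by
  set L : ℝ := Real.logb 2 ((n : ℝ) + 1) with hLdef
  have hn2 : (2:ℝ) ≤ (n:ℝ) + 1 := by
    have : (1:ℝ) ≤ (n:ℝ) := by exact_mod_cast hn
    linarith
  have hL1 : (1:ℝ) ≤ L := by
    rw [hLdef]
    calc (1:ℝ) = Real.logb 2 2 := by simp
    _ ≤ Real.logb 2 ((n:ℝ)+1) :=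
        Real.logb_le_logb_of_le (by norm_num) (by norm_num) hn2
  have hd3 : (3:ℝ) ≤ (d:ℝ) := by exact_mod_cast hd
  have hdL : (0:ℝ) < (d:ℝ) * L := by nlinarith
  have hd1 : ((d:ℝ) + 1) ≠ 0 := by positivity
  have h1 : (k:ℝ) ^ ((d:ℝ)+1) ≤ ((n : ℝ) ^ ((d : ℝ) / ((d : ℝ) + 1)) /
      ((d : ℝ) * L) ^ (1 / ((d : ℝ) + 1))) ^ ((d:ℝ)+1) :=
    Real.rpow_le_rpow (by positivity) hkb (by positivity)
  rw [Real.div_rpow (by positivity) (by positivity)] at h1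
  have ek : (k:ℝ) ^ ((d:ℝ)+1) = (k:ℝ) ^ (d+1 : ℕ) := by
    rw [← Real.rpow_natCast (k:ℝ) (d+1)]; push_cast; ring_nf
  have e1 : ((n : ℝ) ^ ((d : ℝ) / ((d : ℝ) + 1))) ^ ((d:ℝ)+1) = (n:ℝ) ^ (d:ℕ) := by
    rw [← Real.rpow_natCast (n:ℝ) d, ← Real.rpow_mul (by positivity)]
    field_simp
  have e2 : (((d:ℝ) * L) ^ (1 / ((d : ℝ) + 1))) ^ ((d:ℝ)+1) = (d:ℝ) * L := by
    rw [← Real.rpow_mul (le_of_lt hdL)]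
    field_simp
    simp
  rw [ek, e1, e2] at h1
  have h2 : (k:ℝ) ^ (d+1) * ((d:ℝ) * L) ≤ (n:ℝ) ^ d := by
    rw [← le_div_iff₀ hdL]; exact h1
  have hkpos : (0:ℝ) < (k:ℝ) ^ (d+1) := by positivity
  have hx : (0:ℝ) < (k:ℝ) ^ (d+1) * L := by positivity
  have h3 : (k:ℝ) ^ (d+1) * L < (n:ℝ) ^ d := by
    nlinarith [mul_pos (show (0:ℝ) < (d:ℝ)-1 by linarith) hx]
  have h4 : (((n:ℝ)+1) ^ (k ^ (d+1) : ℕ) : ℝ) < ((2:ℝ) ^ (n ^ d : ℕ) : ℝ) := by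
    have hb : ((n:ℝ)+1) = (2:ℝ) ^ L := by
      rw [hLdef, Real.rpow_logb (by norm_num) (by norm_num) (by linarith)]
    rw [hb, ← Real.rpow_natCast ((2:ℝ)^L) _, ← Real.rpow_mul (by norm_num),
      ← Real.rpow_natCast (2:ℝ) (n^d)]
    rw [Real.rpow_lt_rpow_left_iff (by norm_num : (1:ℝ) < 2)]
    push_cast
    calc L * (k:ℝ)^(d+1) = (k:ℝ)^(d+1) * L := by ring
    _ < (n:ℝ)^d := h3
  have hnat : ((n+1) ^ (k ^ (d+1)) : ℕ) < 2 ^ (n ^ d) := by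
    have := h4
    push_cast at this
    exact_mod_cast this
  calc ((Nat.choose n k) + 1) ^ (k ^ d) ≤ ((n+1)^k) ^ (k ^ d) := by
        apply Nat.pow_le_pow_left
        have hc : Nat.choose n k ≤ n ^ k := Nat.choose_le_pow n k
        have hp : n ^ k < (n+1) ^ k := Nat.pow_lt_pow_left (by omega) hk.ne'
        omega
    _ = (n+1) ^ (k ^ (d+1)) := by rw [← pow_mul, pow_succ, Nat.mul_comm (k^d) k]
    _ < 2 ^ (n ^ d) := hnat

theorem stmt1_not_inj (d n k : ℕ)
    (hlt : ((Nat.choose n k) + 1) ^ (k ^ d) < 2 ^ (n ^ d)) :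
    ¬ Function.Injective (Skp d n k) := by
  intro hinj
  have hcard : Fintype.card {s : Finset (Fin n) // s.card = k} = n.choose k := by
    simpa using Fintype.card_finset_len k (α := Fin n)
  have hbound : ∀ A u, Skp d n k A u < n.choose k + 1 := by
    intro A u
    apply Nat.lt_succ_of_le
    calc Skp d n k A u ≤ ∑ _s : {s : Finset (Fin n) // s.card = k}, 1 :=
          Finset.sum_le_sum (fun s _ => Bool.toNat_le _)
      _ = n.choose k := by simp [hcard]
  set g : ((Fin d → Fin n) → Bool) → ((Fin d → Fin k) → Fin (n.choose k + 1)) :=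
    fun A u => ⟨Skp d n k A u, hbound A u⟩ with hg
  have hginj : Function.Injective g := by
    intro A B hAB
    apply hinj
    funext u
    have := congrFun hAB u
    simpa [hg] using congrArg Fin.val this
  have := Fintype.card_le_of_injective g hginj
  simp [Fintype.card_fun] at this
  omega

theorem stmt1 (d n k : ℕ) (hd : 3 ≤ d) (hn : 0 < n) (hk : 0 < k)
    (hkb : (k : ℝ) ≤ (n : ℝ) ^ ((d : ℝ) / ((d : ℝ) + 1)) /
      ((d : ℝ) * Real.logb 2 ((n : ℝ) + 1)) ^ (1 / ((d : ℝ) + 1))) :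
    ((Nat.choose n k) + 1) ^ (k ^ d) < 2 ^ (n ^ d) ∧
      ¬ Function.Injective (Skp d n k) := by
  have h := stmt1_count_lt d n k hd hn hk hkb
  exact ⟨h, stmt1_not_inj d n k h⟩
end

section
/- Fix positive integers n, k with k ≤ n. For 1 ≤ u ≤ k define β_u(x) = binom(x−1, u−1)·binom(n−x, k−u), a polynomial in x of degree k−1. Then β_1, …, β_k form a basis of the vector space of real polynomials of degree less than k. -/
open Polynomial

/-- The polynomial `binom(q, m) = q(q-1)⋯(q-m+1)/m!` for a polynomial argument `q`. -/
noncomputable def choosePoly (m : ℕ) (q : Polynomial ℝ) : Polynomial ℝ :=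
  Polynomial.C (1 / (m.factorial : ℝ)) * ∏ i ∈ Finset.range m, (q - Polynomial.C (i : ℝ))

/-- `β_u(x) = binom(x-1, u-1) * binom(n-x, k-u)`. -/
noncomputable def betaPoly (n k u : ℕ) : Polynomial ℝ :=
  choosePoly (u - 1) (Polynomial.X - Polynomial.C 1) *
    choosePoly (k - u) (Polynomial.C (n : ℝ) - Polynomial.X)

lemma natDegree_choosePoly_le (m : ℕ) (q : Polynomial ℝ) (hq : q.natDegree ≤ 1) :
    (choosePoly m q).natDegree ≤ m := by
  refine (natDegree_C_mul_le _ _).trans ?_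
  refine (natDegree_prod_le _ _).trans ?_
  calc ∑ i ∈ Finset.range m, (q - C (i:ℝ)).natDegree
      ≤ ∑ _i ∈ Finset.range m, 1 := by
        refine Finset.sum_le_sum fun i _ => ?_
        exact (natDegree_sub_le _ _).trans (by simp [hq])
    _ = m := by simp

lemma eval_choosePoly (m : ℕ) (q : Polynomial ℝ) (x : ℝ) :
    (choosePoly m q).eval x
      = (1 / (m.factorial : ℝ)) * ∏ i ∈ Finset.range m, (q.eval x - i) := by
  simp [choosePoly, eval_prod]

lemma betaPoly_mem (n k u : ℕ) (hu : u < k) :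
    betaPoly n k (u + 1) ∈ Polynomial.degreeLT ℝ k := by
  rw [Polynomial.mem_degreeLT]
  have h1 : (betaPoly n k (u+1)).natDegree ≤ u + (k - (u+1)) := by
    refine (natDegree_mul_le).trans ?_
    have := natDegree_choosePoly_le (u+1-1) (X - C 1) (by
      exact (natDegree_sub_le _ _).trans (by simp))
    have h2 := natDegree_choosePoly_le (k-(u+1)) (C (n:ℝ) - X) (by
      exact (natDegree_sub_le _ _).trans (by simp))
    simpa using Nat.add_le_add this h2
  calc (betaPoly n k (u+1)).degree ≤ ((betaPoly n k (u+1)).natDegree : WithBot ℕ) :=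
        degree_le_natDegree
    _ < (k : WithBot ℕ) := by exact_mod_cast lt_of_le_of_lt h1 (by omega)

theorem stmt2 (n k : ℕ) (hn : 0 < n) (hk : 0 < k) (hkn : k ≤ n) :
    ∃ B : Module.Basis (Fin k) ℝ (Polynomial.degreeLT ℝ k),
      ∀ u : Fin k, (B u : Polynomial ℝ) = betaPoly n k ((u : ℕ) + 1) := by
  have : Nonempty (Fin k) := ⟨⟨0, hk⟩⟩
  set b : Fin k → Polynomial.degreeLT ℝ k :=
    fun u => ⟨betaPoly n k ((u:ℕ) + 1), betaPoly_mem n k u u.isLt⟩ with hb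
  -- evaluation matrix
  set M : Matrix (Fin k) (Fin k) ℝ :=
    fun u j => (betaPoly n k ((u:ℕ)+1)).eval ((j:ℕ)+1 : ℝ) with hM
  have evalM : ∀ u j : Fin k, M u j =
      (1 / ((u:ℕ).factorial : ℝ)) * (∏ i ∈ Finset.range (u:ℕ), ((j:ℕ) - i : ℝ)) *
      ((1 / ((k - ((u:ℕ)+1)).factorial : ℝ)) *
        ∏ i ∈ Finset.range (k - ((u:ℕ)+1)), ((n:ℝ) - ((j:ℕ)+1) - i)) := by
    intro u j
    simp only [hM, betaPoly, eval_mul, eval_choosePoly, eval_sub, eval_X, eval_C]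
    norm_num
  have htri : M.BlockTriangular id := by
    intro u j hju
    rw [evalM]
    have : (∏ i ∈ Finset.range (u:ℕ), ((j:ℕ) - i : ℝ)) = 0 := by
      refine Finset.prod_eq_zero (Finset.mem_range.2 (show (j:ℕ) < (u:ℕ) from hju)) ?_
      simp
    rw [this]; ring
  have hdiag : ∀ u : Fin k, M u u ≠ 0 := by
    intro u
    rw [evalM]
    have h1 : (0:ℝ) < ∏ i ∈ Finset.range (u:ℕ), ((u:ℕ) - i : ℝ) := by
      refine Finset.prod_pos fun i hi => ?_
      have := Finset.mem_range.1 hi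
      have : (i:ℝ) < (u:ℕ) := by exact_mod_cast this
      linarith
    have h2 : (0:ℝ) < ∏ i ∈ Finset.range (k - ((u:ℕ)+1)), ((n:ℝ) - ((u:ℕ)+1) - i) := by
      refine Finset.prod_pos fun i hi => ?_
      have hik : i < k - ((u:ℕ)+1) := Finset.mem_range.1 hi
      have : (u:ℕ) + 1 + i < n := by omega
      have : ((u:ℕ) + 1 + i : ℝ) < n := by exact_mod_cast this
      push_cast at this ⊢
      linarith
    have f1 : (0:ℝ) < ((u:ℕ).factorial : ℝ) := by positivity
    have f2 : (0:ℝ) < ((k - ((u:ℕ)+1)).factorial : ℝ) := by positivity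
    positivity
  have hMunit : IsUnit M := by
    rw [Matrix.isUnit_iff_isUnit_det, Matrix.det_of_upperTriangular htri]
    exact IsUnit.mk0 _ (Finset.prod_ne_zero_iff.2 fun u _ => hdiag u)
  have hrows : LinearIndependent ℝ (fun u => M u) :=
    Matrix.linearIndependent_rows_iff_isUnit.2 hMunit
  -- linear map to evaluations
  set φ : Polynomial ℝ →ₗ[ℝ] (Fin k → ℝ) :=
    LinearMap.pi (fun j : Fin k => Polynomial.leval ((j:ℕ)+1 : ℝ)) with hφ
  have hli : LinearIndependent ℝ b := by
    apply LinearIndependent.of_comp (φ.comp (Polynomial.degreeLT ℝ k).subtype)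
    have heq : ⇑(φ.comp (Polynomial.degreeLT ℝ k).subtype) ∘ b = fun u => M u := by
      funext u
      funext j
      simp [hφ, hb, hM, Polynomial.leval]
    rw [heq]
    exact hrows
  have hcard : Fintype.card (Fin k) = Module.finrank ℝ (Polynomial.degreeLT ℝ k) := by
    have := (Polynomial.degreeLTEquiv ℝ k).finrank_eq
    simp [this]
  refine ⟨basisOfLinearIndependentOfCardEqFinrank hli hcard, fun u => ?_⟩
  rw [coe_basisOfLinearIndependentOfCardEqFinrank]
end

section
/- Let λ be a positive integer and d ≥ 3. Let a = (a₁,…,a_d) ∈ ℤ^d be primitive (gcd of all coordinates is 1) satisfying: gcd(λ^d, a_i) = λ^{d−i} for 3 ≤ i ≤ d, gcd(a₁,a₂) = λ^{d−2}, and √(a₁²+a₂²) ≥ λ^{d−1}. Then every nonzero integer point x = (x₁,…,x_d) with a₁x₁ + ⋯ + a_d x_d = 0 has Euclidean norm ‖x‖ ≥ λ. -/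
set_option maxHeartbeats 1000000


theorem stmt3 (d lam : ℕ) (hd : 3 ≤ d) (hlam : 0 < lam) (a : Fin d → ℤ)
    (hprim : Finset.univ.gcd a = 1)
    (hgcd : ∀ i : Fin d, 2 ≤ (i : ℕ) →
      Int.gcd ((lam : ℤ) ^ d) (a i) = lam ^ (d - 1 - (i : ℕ)))
    (h12 : Int.gcd (a ⟨0, by omega⟩) (a ⟨1, by omega⟩) = lam ^ (d - 2))
    (hnorm : Real.sqrt (((a ⟨0, by omega⟩ : ℤ) : ℝ) ^ 2 + ((a ⟨1, by omega⟩ : ℤ) : ℝ) ^ 2)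
      ≥ (lam : ℝ) ^ (d - 1)) :
    ∀ x : Fin d → ℤ, x ≠ 0 → (∑ i, a i * x i) = 0 →
      Real.sqrt (∑ i, ((x i : ℝ)) ^ 2) ≥ (lam : ℝ) := by
  intro x hx hsum
  set i0 : Fin d := ⟨0, by omega⟩ with hi0
  set i1 : Fin d := ⟨1, by omega⟩ with hi1
  by_cases hcase : ∃ i : Fin d, 2 ≤ (i : ℕ) ∧ x i ≠ 0
  · -- Case 1: some coordinate with index ≥ 2 is nonzero; take the largest.
    obtain ⟨j, hj2, hjx⟩ := hcase
    set S : Finset (Fin d) := Finset.univ.filter (fun i : Fin d => 2 ≤ (i : ℕ) ∧ x i ≠ 0) with hS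
    have hSne : S.Nonempty := ⟨j, by simp [hS, hj2, hjx]⟩
    set k : Fin d := S.max' hSne with hkdef
    have hkmem : 2 ≤ (k : ℕ) ∧ x k ≠ 0 := by
      have := S.max'_mem hSne
      simpa [hS] using this
    obtain ⟨hk2, hkx⟩ := hkmem
    have hkmax : ∀ i : Fin d, k < i → x i = 0 := by
      intro i hi
      by_contra h
      have hi2 : 2 ≤ (i : ℕ) := le_trans hk2 (le_of_lt hi)
      have : i ∈ S := by simp [hS, hi2, h]
      exact absurd (S.le_max' i this) (not_le.mpr hi)
    -- λ^{d-k} divides every a i * x i with i ≠ k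
    have hdvd : ∀ i : Fin d, i ≠ k → (lam : ℤ) ^ (d - (k : ℕ)) ∣ a i * x i := by
      intro i hik
      rcases lt_or_gt_of_ne hik with hlt | hgt
      · -- i < k
        rcases lt_or_ge (i : ℕ) 2 with hi2 | hi2
        · -- i ∈ {0,1}: λ^{d-2} ∣ a i
          have hdvd2 : (lam : ℤ) ^ (d - 2) ∣ a i := by
            interval_cases h : (i : ℕ)
            · have : i = i0 := Fin.ext (by simp [hi0, h])
              rw [this]
              have := @Int.gcd_dvd_left (a i0) (a i1)
              rw [h12] at this
              exact_mod_cast this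
            · have : i = i1 := Fin.ext (by simp [hi1, h])
              rw [this]
              have := @Int.gcd_dvd_right (a i0) (a i1)
              rw [h12] at this
              exact_mod_cast this
          exact dvd_mul_of_dvd_left (dvd_trans (pow_dvd_pow _ (by omega)) hdvd2) _
        · -- i ≥ 2: λ^{d-1-i} ∣ a i
          have hdvdi : (lam : ℤ) ^ (d - 1 - (i : ℕ)) ∣ a i := by
            have := @Int.gcd_dvd_right ((lam : ℤ) ^ d) (a i)
            rw [hgcd i hi2] at this
            exact_mod_cast this
          have hik' : (i : ℕ) < (k : ℕ) := hlt
          exact dvd_mul_of_dvd_left (dvd_trans (pow_dvd_pow _ (by omega)) hdvdi) _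
      · -- i > k: x i = 0
        rw [hkmax i hgt, mul_zero]
        exact dvd_zero _
    -- hence λ^{d-k} ∣ a k * x k
    have hdvdk : (lam : ℤ) ^ (d - (k : ℕ)) ∣ a k * x k := by
      have heq : a k * x k = -∑ i ∈ Finset.univ.erase k, a i * x i := by
        rw [← Finset.add_sum_erase _ _ (Finset.mem_univ k)] at hsum
        linarith
      rw [heq]
      exact dvd_neg.mpr (Finset.dvd_sum (fun i hi => hdvd i (Finset.ne_of_mem_erase hi)))
    -- gcd structure of a k
    have hgk := hgcd k hk2
    have hak : ((lam : ℤ)) ^ (d - 1 - (k : ℕ)) ∣ a k := by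
      have := @Int.gcd_dvd_right ((lam : ℤ) ^ d) (a k)
      rw [hgk] at this
      exact_mod_cast this
    obtain ⟨b, hb⟩ := hak
    have hkd : (k : ℕ) < d := k.isLt
    have hsplit : (lam : ℤ) ^ d = (lam : ℤ) ^ (d - 1 - (k : ℕ)) * (lam : ℤ) ^ ((k : ℕ) + 1) := by
      rw [← pow_add]
      congr 1
      omega
    have hco1 : Int.gcd ((lam : ℤ) ^ ((k : ℕ) + 1)) b = 1 := by
      rw [hsplit, hb, Int.gcd_mul_left] at hgk
      have hpos : 0 < lam ^ (d - 1 - (k : ℕ)) := pow_pos hlam _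
      have : ((lam : ℤ) ^ (d - 1 - (k : ℕ))).natAbs = lam ^ (d - 1 - (k : ℕ)) := by
        simp [Int.natAbs_pow]
      rw [this] at hgk
      nth_rewrite 2 [← mul_one (lam ^ (d - 1 - (k : ℕ)))] at hgk
      exact Nat.eq_of_mul_eq_mul_left hpos hgk
    have hco : IsCoprime ((lam : ℤ)) b := by
      have h1 : IsCoprime ((lam : ℤ) ^ ((k : ℕ) + 1)) b := Int.isCoprime_iff_gcd_eq_one.mpr hco1
      exact IsCoprime.of_isCoprime_of_dvd_left h1 (dvd_pow_self _ (Nat.succ_ne_zero _))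
    -- λ ∣ x k
    have hlxk : (lam : ℤ) ∣ x k := by
      have h1 : (lam : ℤ) ^ (d - 1 - (k : ℕ)) * (lam : ℤ) ∣
          (lam : ℤ) ^ (d - 1 - (k : ℕ)) * (b * x k) := by
        have e1 : (lam : ℤ) ^ (d - 1 - (k : ℕ)) * (lam : ℤ) = (lam : ℤ) ^ (d - (k : ℕ)) := by
          rw [← pow_succ]
          congr 1
          omega
        have e2 : (lam : ℤ) ^ (d - 1 - (k : ℕ)) * (b * x k) = a k * x k := by
          rw [hb]; ring
        rw [e1, e2]
        exact hdvdk
      have hne : ((lam : ℤ)) ^ (d - 1 - (k : ℕ)) ≠ 0 := by positivity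
      have h2 : (lam : ℤ) ∣ b * x k := (mul_dvd_mul_iff_left hne).mp h1
      exact hco.dvd_of_dvd_mul_left h2
    have habs : (lam : ℤ) ≤ |x k| := Int.le_of_dvd (abs_pos.mpr hkx) ((dvd_abs _ _).mpr hlxk)
    -- finish
    have hstep : Real.sqrt ((x k : ℝ) ^ 2) ≤ Real.sqrt (∑ i, (x i : ℝ) ^ 2) :=
      Real.sqrt_le_sqrt (Finset.single_le_sum (f := fun i => ((x i : ℝ)) ^ 2) (fun i _ => sq_nonneg _) (Finset.mem_univ k))
    rw [Real.sqrt_sq_eq_abs] at hstep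
    have : (lam : ℝ) ≤ |(x k : ℝ)| := by
      rw [← Int.cast_abs]
      exact_mod_cast habs
    calc (lam : ℝ) ≤ |(x k : ℝ)| := this
      _ ≤ Real.sqrt (∑ i, (x i : ℝ) ^ 2) := hstep
  · -- Case 2: x i = 0 for all i ≥ 2
    push_neg at hcase
    have hne01 : i0 ≠ i1 := by
      intro h
      have := Fin.mk.injEq 0 (by omega : (0:ℕ) < d) 1 (by omega : (1:ℕ) < d) ▸ h
      simp [hi0, hi1, Fin.ext_iff] at h
    have hsum2 : a i0 * x i0 + a i1 * x i1 = 0 := by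
      have hsub : ∑ i, a i * x i = ∑ i ∈ ({i0, i1} : Finset (Fin d)), a i * x i := by
        symm
        apply Finset.sum_subset (Finset.subset_univ _)
        intro i _ hi
        simp only [Finset.mem_insert, Finset.mem_singleton] at hi
        push_neg at hi
        have h2 : 2 ≤ (i : ℕ) := by
          rcases hi with ⟨h1, h2⟩
          have : (i : ℕ) ≠ 0 := fun h => h1 (Fin.ext (by simp [hi0, h]))
          have : (i : ℕ) ≠ 1 := fun h => h2 (Fin.ext (by simp [hi1, h]))
          omega
        rw [hcase i h2, mul_zero]
      rw [hsub, Finset.sum_pair hne01] at hsum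
      exact hsum
    -- factor out λ^{d-2}
    have h0dvd : (lam : ℤ) ^ (d - 2) ∣ a i0 := by
      have := @Int.gcd_dvd_left (a i0) (a i1)
      rw [h12] at this
      exact_mod_cast this
    have h1dvd : (lam : ℤ) ^ (d - 2) ∣ a i1 := by
      have := @Int.gcd_dvd_right (a i0) (a i1)
      rw [h12] at this
      exact_mod_cast this
    obtain ⟨a0', h0⟩ := h0dvd
    obtain ⟨a1', h1⟩ := h1dvd
    have hco' : Int.gcd a0' a1' = 1 := by
      rw [h0, h1, Int.gcd_mul_left] at h12
      have hpos : 0 < lam ^ (d - 2) := pow_pos hlam _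
      have hnat : ((lam : ℤ) ^ (d - 2)).natAbs = lam ^ (d - 2) := by
        simp [Int.natAbs_pow]
      rw [hnat] at h12
      nth_rewrite 2 [← mul_one (lam ^ (d - 2))] at h12
      exact Nat.eq_of_mul_eq_mul_left hpos h12
    have hco : IsCoprime a0' a1' := Int.isCoprime_iff_gcd_eq_one.mpr hco'
    have heq' : a0' * x i0 + a1' * x i1 = 0 := by
      have hne : ((lam : ℤ)) ^ (d - 2) ≠ 0 := by positivity
      have : (lam : ℤ) ^ (d - 2) * (a0' * x i0 + a1' * x i1) = 0 := by
        rw [h0, h1] at hsum2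
        linarith
      exact (mul_eq_zero.mp this).resolve_left hne
    -- divisibilities
    have hd10 : a1' ∣ x i0 := by
      have : a1' ∣ a0' * x i0 := ⟨-(x i1), by linarith⟩
      exact (hco.symm).dvd_of_dvd_mul_left this
    have hd01 : a0' ∣ x i1 := by
      have : a0' ∣ a1' * x i1 := ⟨-(x i0), by linarith⟩
      exact hco.dvd_of_dvd_mul_left this
    -- (x i0, x i1) ≠ (0,0)
    have hxnz : x i0 ≠ 0 ∨ x i1 ≠ 0 := by
      by_contra h
      push_neg at h
      apply hx
      funext i
      rcases lt_or_ge (i : ℕ) 2 with hi2 | hi2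
      · interval_cases hv : (i : ℕ)
        · have : i = i0 := Fin.ext (by simp [hi0, hv])
          rw [this]; exact h.1
        · have : i = i1 := Fin.ext (by simp [hi1, hv])
          rw [this]; exact h.2
      · exact hcase i hi2
    -- key integer inequality
    have key : a0' ^ 2 + a1' ^ 2 ≤ x i0 ^ 2 + x i1 ^ 2 := by
      have sq_le : ∀ u v : ℤ, u ∣ v → v ≠ 0 → u ^ 2 ≤ v ^ 2 := by
        intro u v huv hv
        have h1 : |u| ≤ |v| := Int.le_of_dvd (abs_pos.mpr hv) ((abs_dvd _ _).mpr ((dvd_abs _ _).mpr huv))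
        have h2 : 0 ≤ |u| := abs_nonneg u
        nlinarith [sq_abs u, sq_abs v]
      by_cases hx0 : x i0 = 0
      · have hx1 : x i1 ≠ 0 := hxnz.resolve_left (by simp [hx0])
        have ha1 : a1' * x i1 = 0 := by rw [hx0] at heq'; linarith
        have ha1' : a1' = 0 := by
          rcases mul_eq_zero.mp ha1 with h | h
          · exact h
          · exact absurd h hx1
        have : a0' ^ 2 ≤ x i1 ^ 2 := sq_le _ _ hd01 hx1
        have hx1sq : 0 ≤ x i0 ^ 2 := sq_nonneg _
        rw [ha1']
        nlinarith
      · by_cases hx1 : x i1 = 0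
        · have ha0 : a0' * x i0 = 0 := by rw [hx1] at heq'; linarith
          have ha0' : a0' = 0 := by
            rcases mul_eq_zero.mp ha0 with h | h
            · exact h
            · exact absurd h hx0
          have : a1' ^ 2 ≤ x i0 ^ 2 := sq_le _ _ hd10 hx0
          rw [ha0']
          nlinarith [sq_nonneg (x i1)]
        · have h1 : a1' ^ 2 ≤ x i0 ^ 2 := sq_le _ _ hd10 hx0
          have h2 : a0' ^ 2 ≤ x i1 ^ 2 := sq_le _ _ hd01 hx1
          linarith
    -- translate norm hypothesis
    have hlpos : (0 : ℝ) < (lam : ℝ) ^ (d - 2) := by positivity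
    have hA : ((a i0 : ℤ) : ℝ) ^ 2 + ((a i1 : ℤ) : ℝ) ^ 2
        = ((lam : ℝ) ^ (d - 2)) ^ 2 * ((a0' : ℝ) ^ 2 + (a1' : ℝ) ^ 2) := by
      rw [h0, h1]
      push_cast
      ring
    have hsqrtA : Real.sqrt (((a i0 : ℤ) : ℝ) ^ 2 + ((a i1 : ℤ) : ℝ) ^ 2)
        = (lam : ℝ) ^ (d - 2) * Real.sqrt ((a0' : ℝ) ^ 2 + (a1' : ℝ) ^ 2) := by
      rw [hA, Real.sqrt_mul (by positivity), Real.sqrt_sq (le_of_lt hlpos)]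
    have hnorm' : (lam : ℝ) ≤ Real.sqrt ((a0' : ℝ) ^ 2 + (a1' : ℝ) ^ 2) := by
      have h1 : (lam : ℝ) ^ (d - 1) ≤ (lam : ℝ) ^ (d - 2) * Real.sqrt ((a0' : ℝ) ^ 2 + (a1' : ℝ) ^ 2) := by
        rw [← hsqrtA]
        exact hnorm
      have h2 : (lam : ℝ) ^ (d - 1) = (lam : ℝ) ^ (d - 2) * (lam : ℝ) := by
        rw [← pow_succ]
        congr 1
        omega
      rw [h2] at h1
      exact le_of_mul_le_mul_left h1 hlpos
    -- chain of inequalities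
    have hstep1 : Real.sqrt ((a0' : ℝ) ^ 2 + (a1' : ℝ) ^ 2)
        ≤ Real.sqrt ((x i0 : ℝ) ^ 2 + (x i1 : ℝ) ^ 2) := by
      apply Real.sqrt_le_sqrt
      exact_mod_cast key
    have hstep2 : Real.sqrt ((x i0 : ℝ) ^ 2 + (x i1 : ℝ) ^ 2)
        ≤ Real.sqrt (∑ i, (x i : ℝ) ^ 2) := by
      apply Real.sqrt_le_sqrt
      have : (x i0 : ℝ) ^ 2 + (x i1 : ℝ) ^ 2 = ∑ i ∈ ({i0, i1} : Finset (Fin d)), (x i : ℝ) ^ 2 := by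
        rw [Finset.sum_pair hne01]
      rw [this]
      exact Finset.sum_le_sum_of_subset_of_nonneg (Finset.subset_univ _)
        (fun i _ _ => sq_nonneg _)
    linarith
end

section
/- Let α₀ be a hyperplane in ℝ^d through the origin with basis y₁,…,y_{d−1}, and let a₀ be a normal vector of α₀. For each 1 ≤ i ≤ d−1 let h_i be the projection of y_i onto the orthogonal complement of Span(y₁,…,y_{i−1},y_{i+1},…,y_{d−1}) within α₀ (assume h_i ≠ 0), set θ_i = arcsin(‖h_i‖^{−1}) assuming ‖h_i‖ ≥ 1, and let a_i be the unit vector obtained by rotating a₀/‖a₀‖ towards h_i by angle θ_i in the plane Span(a₀, h_i). Then for every x = x₁y₁ + ⋯ + x_{d−1}y_{d−1} ∈ α₀ and every 1 ≤ i ≤ d−1, the inner product a_i · x equals x_i. -/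
open scoped RealInnerProductSpace

theorem stmt10 (d : ℕ) (hd : 2 ≤ d)
    (y : Fin (d - 1) → EuclideanSpace ℝ (Fin d))
    (hli : LinearIndependent ℝ y)
    (a₀ : EuclideanSpace ℝ (Fin d)) (ha₀ : a₀ ≠ 0)
    (horth : ∀ j, ⟪a₀, y j⟫ = 0)
    (h : Fin (d - 1) → EuclideanSpace ℝ (Fin d))
    (hh : ∀ i, h i =
      (Submodule.orthogonalProjectionOnto ((Submodule.span ℝ (y '' {j | j ≠ i}))ᗮ) (y i) :
        EuclideanSpace ℝ (Fin d)))
    (hne : ∀ i, h i ≠ 0) (hbig : ∀ i, 1 ≤ ‖h i‖)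
    (a : Fin (d - 1) → EuclideanSpace ℝ (Fin d))
    (ha : ∀ i, a i = Real.sqrt (1 - (‖h i‖⁻¹) ^ 2) • (‖a₀‖⁻¹ • a₀)
      + (‖h i‖⁻¹ * ‖h i‖⁻¹) • h i) :
    ∀ (x : Fin (d - 1) → ℝ) (i : Fin (d - 1)),
      ⟪a i, ∑ j, x j • y j⟫ = x i := by
  intro x i
  have hmem : h i ∈ (Submodule.span ℝ (y '' {j | j ≠ i}))ᗮ := by
    rw [hh i]; exact (Submodule.orthogonalProjectionOnto _ (y i)).2
  have key : ∀ j, ⟪a i, y j⟫ = if j = i then 1 else 0 := by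
    intro j
    have hnorm : ‖h i‖ ≠ 0 := norm_ne_zero_iff.mpr (hne i)
    rw [ha i, inner_add_left, real_inner_smul_left, real_inner_smul_left,
      real_inner_smul_left, horth j]
    by_cases hji : j = i
    · subst hji
      have hdiff : y j - h j ∈ ((Submodule.span ℝ (y '' {k | k ≠ j}))ᗮ)ᗮ := by
        rw [hh j]; exact Submodule.sub_starProjection_mem_orthogonal (y j)
      have : ⟪h j, y j - h j⟫ = 0 := hdiff (h j) hmem
      have h2 : ⟪h j, y j⟫ = ‖h j‖ ^ 2 := by
        have := this
        rw [inner_sub_right, sub_eq_zero] at this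
        rw [this, real_inner_self_eq_norm_sq]
      rw [h2]
      rw [if_pos rfl]
      field_simp
      ring
    · have hy : y j ∈ Submodule.span ℝ (y '' {k | k ≠ i}) :=
        Submodule.subset_span ⟨j, hji, rfl⟩
      have : ⟪y j, h i⟫ = 0 := (Submodule.mem_orthogonal _ _).1 hmem (y j) hy
      rw [real_inner_comm] at this
      rw [this, if_neg hji]
      ring
  rw [inner_sum]
  simp only [real_inner_smul_right, key]
  simp
end

section
/- Every convex lattice polygon contained in the square [0,n]² has at most C·n^{2/3} vertices for some absolute constant C and sufficiently large n. -/
namespace Stmt14Aux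


def crossZ (a b : ℤ × ℤ) : ℤ := a.1 * b.2 - a.2 * b.1

lemma affine_pos {α β x1 x2 x : ℤ} (h1 : 0 < α + β * x1) (h2 : 0 < α + β * x2)
    (hx1 : x1 ≤ x) (hx2 : x ≤ x2) : 0 < α + β * x := by
  rcases le_total 0 β with h | h
  · nlinarith
  · nlinarith

lemma nx_inj {P : Finset (ℤ × ℤ)} {nx : ℤ × ℤ → ℤ × ℤ}
    (hne : ∀ p ∈ P, nx p ≠ p)
    (h1 : ∀ p ∈ P, ∀ r ∈ P, r ≠ p → r ≠ nx p → 0 < crossZ (nx p - p) (r - p)) :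
    ∀ p ∈ P, ∀ p' ∈ P, nx p = nx p' → p = p' := by
  intro p hp p' hp' heq
  by_contra hne'
  have hq' : p' ≠ nx p := fun h => hne p' hp' (by rw [← heq, ← h])
  have hq : p ≠ nx p' := fun h => hne p hp (by rw [heq, ← h])
  have c1 : 0 < crossZ (nx p - p) (p' - p) := h1 p hp p' hp' (fun h => hne' h.symm) hq'
  have c2 : 0 < crossZ (nx p' - p') (p - p') := h1 p' hp' p hp (fun h => hne' h) hq
  rw [← heq] at c2
  simp only [crossZ, Prod.fst_sub, Prod.snd_sub] at c1 c2
  nlinarith [c1, c2]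

lemma core (n : ℤ) (hn : 0 ≤ n) (P : Finset (ℤ × ℤ)) (nx : ℤ × ℤ → ℤ × ℤ)
    (hmem : ∀ p ∈ P, nx p ∈ P) (hne : ∀ p ∈ P, nx p ≠ p)
    (h1 : ∀ p ∈ P, ∀ r ∈ P, r ≠ p → r ≠ nx p → 0 < crossZ (nx p - p) (r - p))
    (hx : ∀ p ∈ P, 0 ≤ p.1 ∧ p.1 ≤ n) :
    ∑ p ∈ P.filter (fun p => p.1 < (nx p).1), ((nx p).1 - p.1) ≤ n := by
  classical
  set S := P.filter (fun p => p.1 < (nx p).1) with hS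
  have hinj := nx_inj hne h1
  have hdisj : ∀ p ∈ S, ∀ p' ∈ S, p ≠ p' →
      Disjoint (Finset.Ioc p.1 (nx p).1) (Finset.Ioc p'.1 (nx p').1) := by
    intro p hpS p' hpS' hpp'
    have hp := (Finset.mem_filter.1 hpS).1
    have hdx : p.1 < (nx p).1 := (Finset.mem_filter.1 hpS).2
    have hp' := (Finset.mem_filter.1 hpS').1
    have hdx' : p'.1 < (nx p').1 := (Finset.mem_filter.1 hpS').2
    rw [Finset.disjoint_left]
    intro x hx1 hx2
    simp only [Finset.mem_Ioc] at hx1 hx2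
    set q := nx p with hqdef
    set q' := nx p' with hq'def
    have hqq' : q ≠ q' := fun h => hpp' (hinj p hp p' hp' h)
    by_cases hcase1 : q = p'
    · rw [hcase1] at hx1; omega
    by_cases hcase2 : q' = p
    · rw [hcase2] at hx2; omega
    have F1 : 0 < crossZ (q - p) (p' - p) := h1 p hp p' hp' (Ne.symm hpp') (fun h => hcase1 h.symm)
    have F2 : 0 < crossZ (q - p) (q' - p) := h1 p hp q' (hmem p' hp') hcase2 (fun h => hqq' h.symm)
    have F3 : 0 < crossZ (q' - p') (p - p') := h1 p' hp' p hp hpp' (fun h => hcase2 h.symm)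
    have F4 : 0 < crossZ (q' - p') (q - p') := h1 p' hp' q (hmem p hp) hcase1 (fun h => hqq' h)
    simp only [crossZ, Prod.fst_sub, Prod.snd_sub] at F1 F2 F3 F4
    set d1 := q.1 - p.1 with hd1
    set d2 := q.2 - p.2 with hd2
    set e1 := q'.1 - p'.1 with he1
    set e2 := q'.2 - p'.2 with he2
    have hd1pos : 0 < d1 := by omega
    have he1pos : 0 < e1 := by omega
    set α := e1 * (d1 * p.2 - d2 * p.1) - d1 * (e1 * p'.2 - e2 * p'.1) with hα
    set β := e1 * d2 - d1 * e2 with hβ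
    have G1 : 0 < α + β * p.1 := by
      have h : α + β * p.1 = d1 * (e1 * (p.2 - p'.2) - e2 * (p.1 - p'.1)) := by
        rw [hα, hβ]; ring
      rw [h]
      have : 0 < e1 * (p.2 - p'.2) - e2 * (p.1 - p'.1) := by linarith [F3]
      positivity
    have G2 : 0 < α + β * q.1 := by
      have h : α + β * q.1 = d1 * (e1 * (q.2 - p'.2) - e2 * (q.1 - p'.1)) := by
        rw [hα, hβ, hd1, hd2]; ring
      rw [h]
      have : 0 < e1 * (q.2 - p'.2) - e2 * (q.1 - p'.1) := by linarith [F4]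
      positivity
    have G3 : α + β * p'.1 < 0 := by
      have h : α + β * p'.1 = -(e1 * (d1 * (p'.2 - p.2) - d2 * (p'.1 - p.1))) := by
        rw [hα, hβ, he1, he2]; ring
      rw [h]
      have : 0 < d1 * (p'.2 - p.2) - d2 * (p'.1 - p.1) := by linarith [F1]
      nlinarith
    have G4 : α + β * q'.1 < 0 := by
      have h : α + β * q'.1 = -(e1 * (d1 * (q'.2 - p.2) - d2 * (q'.1 - p.1))) := by
        rw [hα, hβ, he1, he2, hd1, hd2]; ring
      rw [h]
      have : 0 < d1 * (q'.2 - p.2) - d2 * (q'.1 - p.1) := by linarith [F2]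
      nlinarith
    have Gpos : 0 < α + β * x := affine_pos G1 G2 (le_of_lt hx1.1) hx1.2
    have Gneg : 0 < (-α) + (-β) * x := by
      have := affine_pos (α := -α) (β := -β) (x1 := p'.1) (x2 := q'.1)
        (by linarith) (by linarith) (le_of_lt hx2.1) hx2.2
      linarith
    linarith
  have key : ∀ p ∈ S, ((nx p).1 - p.1) = ((Finset.Ioc p.1 (nx p).1).card : ℤ) := by
    intro p hpS
    have hdx : p.1 < (nx p).1 := (Finset.mem_filter.1 hpS).2
    rw [Int.card_Ioc, Int.toNat_of_nonneg (by omega)]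
  rw [Finset.sum_congr rfl key]
  have hsub : ∀ p ∈ S, Finset.Ioc p.1 (nx p).1 ⊆ Finset.Ioc 0 n := by
    intro p hpS
    have hp := (Finset.mem_filter.1 hpS).1
    exact Finset.Ioc_subset_Ioc (hx p hp).1 (hx (nx p) (hmem p hp)).2
  calc (∑ p ∈ S, ((Finset.Ioc p.1 (nx p).1).card : ℤ))
      = ((∑ p ∈ S, (Finset.Ioc p.1 (nx p).1).card : ℕ) : ℤ) := by push_cast; ring
    _ = ((S.biUnion (fun p => Finset.Ioc p.1 (nx p).1)).card : ℤ) := by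
        rw [Finset.card_biUnion hdisj]
    _ ≤ ((Finset.Ioc (0:ℤ) n).card : ℤ) := by
        exact_mod_cast Finset.card_le_card (Finset.biUnion_subset.2 hsub)
    _ = n := by rw [Int.card_Ioc, Int.toNat_of_nonneg (by omega)]; omega




noncomputable def ι (q : ℤ × ℤ) : ℝ × ℝ := ((q.1 : ℝ), (q.2 : ℝ))

lemma ι_inj : Function.Injective ι := by
  intro a b h
  simp only [ι, Prod.mk.injEq] at h
  exact Prod.ext (by exact_mod_cast h.1) (by exact_mod_cast h.2)

lemma ι_sub (a b : ℤ × ℤ) : ι a - ι b = ι (a - b) := by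
  simp only [ι, Prod.fst_sub, Prod.snd_sub]
  ext <;> push_cast <;> simp

lemma cross_trans (f : (ℝ × ℝ) →L[ℝ] ℝ) (a b c : ℤ × ℤ)
    (ha : f (ι a) < 0) (hb : f (ι b) < 0) (hc : f (ι c) < 0)
    (hab : 0 < crossZ a b) (hbc : 0 < crossZ b c) : 0 < crossZ a c := by
  set u1 := f (1, 0) with hu1
  set u2 := f (0, 1) with hu2
  have hrep : ∀ v : ℝ × ℝ, f v = v.1 * u1 + v.2 * u2 := by
    intro v
    have hv : v = v.1 • ((1:ℝ), (0:ℝ)) + v.2 • ((0:ℝ), (1:ℝ)) := by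
      ext <;> simp
    rw [hv, map_add, map_smul, map_smul, ← hv]
    simp [smul_eq_mul, hu1, hu2]
  rw [hrep] at ha hb hc
  simp only [ι] at ha hb hc
  have habR : (0:ℝ) < (a.1 : ℝ) * b.2 - a.2 * b.1 := by exact_mod_cast hab
  have hbcR : (0:ℝ) < (b.1 : ℝ) * c.2 - b.2 * c.1 := by exact_mod_cast hbc
  have goal : (0:ℝ) < (a.1 : ℝ) * c.2 - a.2 * c.1 := by
    by_contra h
    push_neg at h
    have key : ((a.1 : ℝ) * c.2 - a.2 * c.1) * ((b.1:ℝ) * u1 + (b.2:ℝ) * u2)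
        = ((a.1:ℝ) * b.2 - a.2 * b.1) * ((c.1:ℝ) * u1 + (c.2:ℝ) * u2)
          + ((b.1:ℝ) * c.2 - b.2 * c.1) * ((a.1:ℝ) * u1 + (a.2:ℝ) * u2) := by ring
    nlinarith [mul_nonneg (neg_nonneg.2 h) (neg_nonneg.2 (le_of_lt hb)),
      mul_pos habR (neg_pos.2 hc), mul_pos hbcR (neg_pos.2 ha)]
  exact_mod_cast goal

lemma cross_antisymm (a b : ℤ × ℤ) : crossZ a b = - crossZ b a := by
  simp only [crossZ]; ring

lemma exists_max (f : (ℝ × ℝ) →L[ℝ] ℝ) (p : ℤ × ℤ) (F : Finset (ℤ × ℤ)) (hF : F.Nonempty)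
    (hf : ∀ r ∈ F, f (ι (r - p)) < 0)
    (hcr : ∀ r ∈ F, ∀ r' ∈ F, r ≠ r' → crossZ (r - p) (r' - p) ≠ 0) :
    ∃ q ∈ F, ∀ r ∈ F, r ≠ q → 0 < crossZ (q - p) (r - p) := by
  classical
  revert hF hf hcr
  induction F using Finset.induction_on with
  | empty => intro hF _ _; exact absurd hF (by simp)
  | @insert a s ha ih =>
    intro hF hf hcr
    rcases s.eq_empty_or_nonempty with rfl | hs
    · refine ⟨a, by simp, ?_⟩
      intro r hr hra
      simp only [Finset.mem_insert, Finset.notMem_empty, or_false] at hr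
      exact absurd hr hra
    · obtain ⟨q', hq's, hq'⟩ := ih hs
        (fun r hr => hf r (Finset.mem_insert_of_mem hr))
        (fun r hr r' hr' h => hcr r (Finset.mem_insert_of_mem hr) r' (Finset.mem_insert_of_mem hr') h)
      have haq' : a ≠ q' := fun h => ha (h ▸ hq's)
      have hc := hcr q' (Finset.mem_insert_of_mem hq's) a (Finset.mem_insert_self a s) (Ne.symm haq')
      rcases lt_trichotomy (crossZ (q' - p) (a - p)) 0 with hlt | heq0 | hgt
      · -- a becomes max
        refine ⟨a, Finset.mem_insert_self a s, ?_⟩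
        intro r hr hra
        rcases Finset.mem_insert.1 hr with rfl | hrs
        · exact absurd rfl hra
        by_cases hrq' : r = q'
        · subst hrq'
          rw [cross_antisymm]
          omega
        · have h1 : 0 < crossZ (a - p) (q' - p) := by
            rw [cross_antisymm]; omega
          have h2 : 0 < crossZ (q' - p) (r - p) := hq' r hrs hrq'
          exact cross_trans f (a - p) (q' - p) (r - p)
            (hf a (Finset.mem_insert_self a s))
            (hf q' (Finset.mem_insert_of_mem hq's))
            (hf r (Finset.mem_insert_of_mem hrs)) h1 h2
      · exact absurd heq0 hc
      · refine ⟨q', Finset.mem_insert_of_mem hq's, ?_⟩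
        intro r hr hrq'
        rcases Finset.mem_insert.1 hr with rfl | hrs
        · exact hgt
        · exact hq' r hrs hrq'


lemma exists_scalar (A1 A2 B1 B2 : ℝ) (hc : A1 * B2 - A2 * B1 = 0)
    (hA : ¬(A1 = 0 ∧ A2 = 0)) : ∃ l : ℝ, B1 = l * A1 ∧ B2 = l * A2 := by
  by_cases hA1 : A1 = 0
  · have hA2 : A2 ≠ 0 := fun h => hA ⟨hA1, h⟩
    have hB1 : B1 = 0 := by
      rw [hA1] at hc
      rcases mul_eq_zero.1 (by linarith : A2 * B1 = 0) with h | h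
      · exact absurd h hA2
      · exact h
    exact ⟨B2 / A2, by rw [hA1, hB1]; ring, by field_simp⟩
  · refine ⟨B1 / A1, by field_simp, ?_⟩
    field_simp
    nlinarith [hc]

lemma not_mem_hull_rest (V : Finset (ℤ × ℤ))
    (hext : ∀ p ∈ V, ι p ∈ Set.extremePoints ℝ (convexHull ℝ (ι '' (V : Set (ℤ × ℤ))))) :
    ∀ p ∈ V, ι p ∉ convexHull ℝ ((ι '' (V : Set (ℤ × ℤ))) \ {ι p}) := by
  intro p hp h
  have hsub : (ι '' (V : Set (ℤ × ℤ))) ⊆ convexHull ℝ ((ι '' (V : Set (ℤ × ℤ))) \ {ι p}) := by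
    intro s hs
    by_cases hsp : s = ι p
    · rw [hsp]; exact h
    · exact subset_convexHull ℝ _ ⟨hs, hsp⟩
  have heq : convexHull ℝ (ι '' (V : Set (ℤ × ℤ)))
      = convexHull ℝ ((ι '' (V : Set (ℤ × ℤ))) \ {ι p}) :=
    le_antisymm (convexHull_min hsub (convex_convexHull ℝ _))
      (convexHull_mono Set.diff_subset)
  have h2 := hext p hp
  rw [heq] at h2
  have h3 := extremePoints_convexHull_subset h2
  exact h3.2 rfl

lemma no_collinear (V : Finset (ℤ × ℤ))
    (hnot : ∀ p ∈ V, ι p ∉ convexHull ℝ ((ι '' (V : Set (ℤ × ℤ))) \ {ι p})) :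
    ∀ p ∈ V, ∀ r ∈ V, ∀ r' ∈ V, p ≠ r → p ≠ r' → r ≠ r' →
      crossZ (r - p) (r' - p) ≠ 0 := by
  intro p hp r hr r' hr' hpr hpr' hrr' hc
  -- find scalar l with ι r' - ι p = l • (ι r - ι p)
  have ha : r - p ≠ 0 := fun h => hpr (sub_eq_zero.1 h).symm
  have hl : ∃ l : ℝ, ι r' - ι p = l • (ι r - ι p) := by
    have hcR : ((r.1:ℝ) - p.1) * ((r'.2:ℝ) - p.2) - ((r.2:ℝ) - p.2) * ((r'.1:ℝ) - p.1) = 0 := by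
      have h0 : ((r - p).1 * (r' - p).2 - (r - p).2 * (r' - p).1 : ℤ) = 0 := hc
      simp only [Prod.fst_sub, Prod.snd_sub] at h0
      have : (((r.1 - p.1) * (r'.2 - p.2) - (r.2 - p.2) * (r'.1 - p.1) : ℤ) : ℝ) = 0 := by
        exact_mod_cast h0
      push_cast at this
      linarith
    have hA : ¬(((r.1:ℝ) - p.1) = 0 ∧ ((r.2:ℝ) - p.2) = 0) := by
      rintro ⟨e1, e2⟩
      apply hpr
      have t1 : (r.1:ℝ) = (p.1:ℝ) := by linarith
      have h1' : p.1 = r.1 := by exact_mod_cast t1.symm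
      have t2 : (r.2:ℝ) = (p.2:ℝ) := by linarith
      have h2' : p.2 = r.2 := by exact_mod_cast t2.symm
      exact Prod.ext h1' h2'
    obtain ⟨l, h1, h2⟩ := exists_scalar ((r.1:ℝ) - p.1) ((r.2:ℝ) - p.2)
      ((r'.1:ℝ) - p.1) ((r'.2:ℝ) - p.2) hcR hA
    refine ⟨l, ?_⟩
    ext
    · simpa [ι] using h1
    · simpa [ι] using h2
  obtain ⟨l, hlv⟩ := hl
  have hcol : Collinear ℝ ({ι p, ι r, ι r'} : Set (ℝ × ℝ)) := by
    rw [collinear_iff_of_mem (Set.mem_insert (ι p) _)]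
    refine ⟨ι r - ι p, ?_⟩
    intro x hx
    rcases hx with rfl | rfl | rfl
    · exact ⟨0, by simp⟩
    · exact ⟨1, by simp⟩
    · exact ⟨l, by rw [← hlv]; simp⟩
  have hS : ∀ s ∈ V, ∀ m : ℤ × ℤ, s ≠ m → ι s ∈ (ι '' (V : Set (ℤ × ℤ))) \ {ι m} := by
    intro s hs m hsm
    exact ⟨⟨s, hs, rfl⟩, fun h => hsm (ι_inj h)⟩
  rcases hcol.wbtw_or_wbtw_or_wbtw with hw | hw | hw
  · -- r between p and r'
    exact hnot r hr (segment_subset_convexHull (hS p hp r hpr) (hS r' hr' r (Ne.symm hrr'))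
      hw.mem_segment)
  · -- r' between r and p
    exact hnot r' hr' (segment_subset_convexHull (hS r hr r' hrr') (hS p hp r' hpr')
      hw.mem_segment)
  · -- p between r' and r
    exact hnot p hp (segment_subset_convexHull (hS r' hr' p (Ne.symm hpr')) (hS r hr p (Ne.symm hpr))
      hw.mem_segment)


lemma exists_nxt (V : Finset (ℤ × ℤ))
    (hnot : ∀ p ∈ V, ι p ∉ convexHull ℝ ((ι '' (V : Set (ℤ × ℤ))) \ {ι p}))
    (p : ℤ × ℤ) (hp : p ∈ V) (hother : ∃ q ∈ V, q ≠ p) :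
    ∃ q, q ∈ V ∧ q ≠ p ∧ ∀ r ∈ V, r ≠ p → r ≠ q → 0 < crossZ (q - p) (r - p) := by
  classical
  set K := convexHull ℝ ((ι '' (V : Set (ℤ × ℤ))) \ {ι p}) with hK
  have hfin : ((ι '' (V : Set (ℤ × ℤ))) \ {ι p}).Finite :=
    (V.finite_toSet.image ι).diff
  have hclosed : IsClosed K := (hfin.isCompact_convexHull ℝ).isClosed
  obtain ⟨f, u, hfu, hup⟩ :=
    geometric_hahn_banach_closed_point (convex_convexHull ℝ _) hclosed (hnot p hp)
  set F := V.erase p with hF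
  have hFne : F.Nonempty := by
    obtain ⟨q, hq, hqp⟩ := hother
    exact ⟨q, Finset.mem_erase.2 ⟨hqp, hq⟩⟩
  have hf : ∀ r ∈ F, f (ι (r - p)) < 0 := by
    intro r hrF
    obtain ⟨hrp, hr⟩ := Finset.mem_erase.1 hrF
    have hmem : ι r ∈ K := subset_convexHull ℝ _ ⟨⟨r, hr, rfl⟩, fun h => hrp (ι_inj h)⟩
    have : f (ι r) < f (ι p) := lt_trans (hfu _ hmem) hup
    rw [← ι_sub, map_sub]
    linarith
  have hcr : ∀ r ∈ F, ∀ r' ∈ F, r ≠ r' → crossZ (r - p) (r' - p) ≠ 0 := by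
    intro r hrF r' hrF'
    obtain ⟨hrp, hr⟩ := Finset.mem_erase.1 hrF
    obtain ⟨hrp', hr'⟩ := Finset.mem_erase.1 hrF'
    exact no_collinear V hnot p hp r hr r' hr' (Ne.symm hrp) (Ne.symm hrp')
  obtain ⟨q, hqF, hq⟩ := exists_max f p F hFne hf hcr
  obtain ⟨hqp, hqV⟩ := Finset.mem_erase.1 hqF
  refine ⟨q, hqV, hqp, ?_⟩
  intro r hr hrp hrq
  exact hq r (Finset.mem_erase.2 ⟨hrp, hr⟩) hrq


lemma core_T (n : ℤ) (hn : 0 ≤ n) (P : Finset (ℤ × ℤ)) (nx : ℤ × ℤ → ℤ × ℤ)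
    (hmem : ∀ p ∈ P, nx p ∈ P) (hne : ∀ p ∈ P, nx p ≠ p)
    (h1 : ∀ p ∈ P, ∀ r ∈ P, r ≠ p → r ≠ nx p → 0 < crossZ (nx p - p) (r - p))
    (T Tinv : ℤ × ℤ → ℤ × ℤ) (hTinv : ∀ z, Tinv (T z) = z)
    (hC : ∀ p q r : ℤ × ℤ, crossZ (T q - T p) (T r - T p) = crossZ (q - p) (r - p))
    (hx : ∀ p ∈ P, 0 ≤ (T p).1 ∧ (T p).1 ≤ n) :
    ∑ p ∈ P.filter (fun p => (T p).1 < (T (nx p)).1), ((T (nx p)).1 - (T p).1) ≤ n := by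
  classical
  have hTinj : Function.Injective T := fun a b h => by
    have h2 := congrArg Tinv h
    rwa [hTinv, hTinv] at h2
  set nx' : ℤ × ℤ → ℤ × ℤ := fun z => T (nx (Tinv z)) with hnx'
  have hkey : ∀ p, nx' (T p) = T (nx p) := fun p => by simp [hnx', hTinv]
  have H := core n hn (P.image T) nx'
    (by
      rintro z hz
      obtain ⟨p, hp, rfl⟩ := Finset.mem_image.1 hz
      rw [hkey]
      exact Finset.mem_image_of_mem T (hmem p hp))
    (by
      rintro z hz
      obtain ⟨p, hp, rfl⟩ := Finset.mem_image.1 hz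
      rw [hkey]
      exact fun h => hne p hp (hTinj h))
    (by
      rintro z hz w hw hwz hwnx
      obtain ⟨p, hp, rfl⟩ := Finset.mem_image.1 hz
      obtain ⟨r, hr, rfl⟩ := Finset.mem_image.1 hw
      rw [hkey] at hwnx ⊢
      rw [hC]
      exact h1 p hp r hr (fun h => hwz (congrArg T h)) (fun h => hwnx (congrArg T h)))
    (by
      rintro z hz
      obtain ⟨p, hp, rfl⟩ := Finset.mem_image.1 hz
      exact hx p hp)
  have hfilter : (P.image T).filter (fun z => z.1 < (nx' z).1)
      = (P.filter (fun p => (T p).1 < (T (nx p)).1)).image T := by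
    ext z
    simp only [Finset.mem_filter, Finset.mem_image]
    constructor
    · rintro ⟨⟨p, hp, rfl⟩, hlt⟩
      rw [hkey] at hlt
      exact ⟨p, ⟨hp, hlt⟩, rfl⟩
    · rintro ⟨p, ⟨hp, hlt⟩, rfl⟩
      rw [hkey]
      exact ⟨⟨p, hp, rfl⟩, hlt⟩
  rw [hfilter, Finset.sum_image (fun a _ b _ h => hTinj h)] at H
  calc ∑ p ∈ P.filter (fun p => (T p).1 < (T (nx p)).1), ((T (nx p)).1 - (T p).1)
      = ∑ p ∈ P.filter (fun p => (T p).1 < (T (nx p)).1), ((nx' (T p)).1 - (T p).1) := by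
        refine Finset.sum_congr rfl (fun p hp => ?_)
        rw [hkey]
    _ ≤ n := H

section Bounds

variable (n : ℤ) (P : Finset (ℤ × ℤ)) (nx : ℤ × ℤ → ℤ × ℤ)

lemma bound_total (hn : 0 ≤ n)
    (hmem : ∀ p ∈ P, nx p ∈ P) (hne : ∀ p ∈ P, nx p ≠ p)
    (h1 : ∀ p ∈ P, ∀ r ∈ P, r ≠ p → r ≠ nx p → 0 < crossZ (nx p - p) (r - p))
    (hbox : ∀ p ∈ P, 0 ≤ p.1 ∧ p.1 ≤ n ∧ 0 ≤ p.2 ∧ p.2 ≤ n) :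
    ∑ p ∈ P, (|(nx p).1 - p.1| + |(nx p).2 - p.2|) ≤ 4 * n := by
  classical
  have C1 : ∑ p ∈ P.filter (fun p => p.1 < (nx p).1), ((nx p).1 - p.1) ≤ n :=
    core_T n hn P nx hmem hne h1 (fun z => z) (fun z => z) (fun z => rfl)
      (fun p q r => rfl) (fun p hp => ⟨(hbox p hp).1, (hbox p hp).2.1⟩)
  have C2 : ∑ p ∈ P.filter (fun p => (nx p).1 < p.1), (p.1 - (nx p).1) ≤ n := by
    have B := core_T n hn P nx hmem hne h1 (fun z => (n - z.1, -z.2)) (fun z => (n - z.1, -z.2))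
      (fun z => by simp) (fun p q r => by simp only [crossZ, Prod.fst_sub, Prod.snd_sub]; ring)
      (fun p hp => by
        obtain ⟨hb1, hb2, _, _⟩ := hbox p hp
        constructor <;> simp <;> omega)
    refine le_trans (le_of_eq (Finset.sum_congr ?_ ?_)) B
    · refine (Finset.filter_congr (fun p hp => ?_)).symm
      show (n - p.1 < n - (nx p).1) ↔ ((nx p).1 < p.1)
      omega
    · intro p hp
      show p.1 - (nx p).1 = (n - (nx p).1) - (n - p.1)
      ring
  have C3 : ∑ p ∈ P.filter (fun p => p.2 < (nx p).2), ((nx p).2 - p.2) ≤ n := by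
    have B := core_T n hn P nx hmem hne h1 (fun z => (z.2, -z.1)) (fun z => (-z.2, z.1))
      (fun z => by simp) (fun p q r => by simp only [crossZ, Prod.fst_sub, Prod.snd_sub]; ring)
      (fun p hp => by
        obtain ⟨_, _, hb3, hb4⟩ := hbox p hp
        exact ⟨hb3, hb4⟩)
    refine le_trans (le_of_eq (Finset.sum_congr ?_ ?_)) B
    · exact (Finset.filter_congr (fun p hp => Iff.rfl)).symm
    · intro p hp; rfl
  have C4 : ∑ p ∈ P.filter (fun p => (nx p).2 < p.2), (p.2 - (nx p).2) ≤ n := by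
    have B := core_T n hn P nx hmem hne h1 (fun z => (n - z.2, z.1)) (fun z => (z.2, n - z.1))
      (fun z => by simp) (fun p q r => by simp only [crossZ, Prod.fst_sub, Prod.snd_sub]; ring)
      (fun p hp => by
        obtain ⟨_, _, hb3, hb4⟩ := hbox p hp
        constructor <;> simp <;> omega)
    refine le_trans (le_of_eq (Finset.sum_congr ?_ ?_)) B
    · refine (Finset.filter_congr (fun p hp => ?_)).symm
      show (n - p.2 < n - (nx p).2) ↔ ((nx p).2 < p.2)
      omega
    · intro p hp
      show p.2 - (nx p).2 = (n - (nx p).2) - (n - p.2)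
      ring
  have hX : ∑ p ∈ P, |(nx p).1 - p.1| ≤ 2 * n := by
    rw [← Finset.sum_filter_add_sum_filter_not P (fun p => p.1 < (nx p).1)]
    have e1 : ∑ p ∈ P.filter (fun p => p.1 < (nx p).1), |(nx p).1 - p.1|
        = ∑ p ∈ P.filter (fun p => p.1 < (nx p).1), ((nx p).1 - p.1) :=
      Finset.sum_congr rfl (fun p hp => abs_of_pos (by
        have h : p.1 < (nx p).1 := (Finset.mem_filter.1 hp).2
        omega))
    have e2 : ∑ p ∈ P.filter (fun p => ¬ p.1 < (nx p).1), |(nx p).1 - p.1|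
        = ∑ p ∈ P.filter (fun p => (nx p).1 < p.1), (p.1 - (nx p).1) := by
      have e2a : ∑ p ∈ P.filter (fun p => ¬ p.1 < (nx p).1), |(nx p).1 - p.1|
          = ∑ p ∈ P.filter (fun p => ¬ p.1 < (nx p).1), (p.1 - (nx p).1) :=
        Finset.sum_congr rfl (fun p hp => by
          have h : ¬ p.1 < (nx p).1 := (Finset.mem_filter.1 hp).2
          rw [abs_of_nonpos (by omega)]
          ring)
      rw [e2a]
      refine (Finset.sum_subset ?_ ?_).symm
      · intro p hp
        rw [Finset.mem_filter] at hp ⊢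
        have h2 : (nx p).1 < p.1 := hp.2
        exact ⟨hp.1, (by omega : ¬ p.1 < (nx p).1)⟩
      intro p hp hnp
      have h1' : ¬ p.1 < (nx p).1 := (Finset.mem_filter.1 hp).2
      have h2' : ¬ ((nx p).1 < p.1) := fun hlt => hnp (Finset.mem_filter.2 ⟨(Finset.mem_filter.1 hp).1, hlt⟩)
      omega
    rw [e1, e2]
    linarith
  have hY : ∑ p ∈ P, |(nx p).2 - p.2| ≤ 2 * n := by
    rw [← Finset.sum_filter_add_sum_filter_not P (fun p => p.2 < (nx p).2)]
    have e1 : ∑ p ∈ P.filter (fun p => p.2 < (nx p).2), |(nx p).2 - p.2|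
        = ∑ p ∈ P.filter (fun p => p.2 < (nx p).2), ((nx p).2 - p.2) :=
      Finset.sum_congr rfl (fun p hp => abs_of_pos (by
        have h : p.2 < (nx p).2 := (Finset.mem_filter.1 hp).2
        omega))
    have e2 : ∑ p ∈ P.filter (fun p => ¬ p.2 < (nx p).2), |(nx p).2 - p.2|
        = ∑ p ∈ P.filter (fun p => (nx p).2 < p.2), (p.2 - (nx p).2) := by
      have e2a : ∑ p ∈ P.filter (fun p => ¬ p.2 < (nx p).2), |(nx p).2 - p.2|
          = ∑ p ∈ P.filter (fun p => ¬ p.2 < (nx p).2), (p.2 - (nx p).2) :=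
        Finset.sum_congr rfl (fun p hp => by
          have h : ¬ p.2 < (nx p).2 := (Finset.mem_filter.1 hp).2
          rw [abs_of_nonpos (by omega)]
          ring)
      rw [e2a]
      refine (Finset.sum_subset ?_ ?_).symm
      · intro p hp
        rw [Finset.mem_filter] at hp ⊢
        have h2 : (nx p).2 < p.2 := hp.2
        exact ⟨hp.1, (by omega : ¬ p.2 < (nx p).2)⟩
      intro p hp hnp
      have h1' : ¬ p.2 < (nx p).2 := (Finset.mem_filter.1 hp).2
      have h2' : ¬ ((nx p).2 < p.2) := fun hlt => hnp (Finset.mem_filter.2 ⟨(Finset.mem_filter.1 hp).1, hlt⟩)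
      omega
    rw [e1, e2]
    linarith
  rw [Finset.sum_add_distrib]
  linarith

end Bounds

end Stmt14Aux

set_option maxHeartbeats 2000000 in
theorem stmt14 :
    ∃ C : ℝ, ∃ N : ℕ, ∀ n : ℕ, N ≤ n →
      ∀ V : Finset (ℤ × ℤ),
        (∀ p ∈ V, 0 ≤ p.1 ∧ p.1 ≤ (n : ℤ) ∧ 0 ≤ p.2 ∧ p.2 ≤ (n : ℤ)) →
        (∀ p ∈ V, ((p.1 : ℝ), (p.2 : ℝ)) ∈ Set.extremePoints ℝ
          (convexHull ℝ ((fun q : ℤ × ℤ => ((q.1 : ℝ), (q.2 : ℝ))) '' (V : Set (ℤ × ℤ))))) →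
        (V.card : ℝ) ≤ C * (n : ℝ) ^ ((2 : ℝ) / 3) := by
  classical
  refine ⟨100, 1, ?_⟩
  intro n hn V hbox hE
  have hn1R : (1:ℝ) ≤ (n:ℝ) := by exact_mod_cast hn
  have hn0R : (0:ℝ) < (n:ℝ) := by linarith
  set x : ℝ := (n:ℝ) ^ ((1:ℝ)/3) with hxdef
  have hx0 : 0 < x := Real.rpow_pos_of_pos hn0R _
  have hx1 : 1 ≤ x := by
    have h := Real.rpow_le_rpow (by norm_num : (0:ℝ) ≤ 1) hn1R (by norm_num : (0:ℝ) ≤ 1/3)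
    rwa [Real.one_rpow] at h
  have hx3 : x ^ (3:ℕ) = (n:ℝ) := by
    rw [hxdef, ← Real.rpow_natCast ((n:ℝ) ^ ((1:ℝ)/3)) 3, ← Real.rpow_mul (le_of_lt hn0R)]
    norm_num
  have hx2 : x ^ (2:ℕ) = (n:ℝ) ^ ((2:ℝ)/3) := by
    rw [hxdef, ← Real.rpow_natCast ((n:ℝ) ^ ((1:ℝ)/3)) 2, ← Real.rpow_mul (le_of_lt hn0R)]
    norm_num
  have hn23 : (1:ℝ) ≤ (n:ℝ) ^ ((2:ℝ)/3) := by rw [← hx2]; nlinarith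
  by_cases hsmallV : V.card ≤ 1
  · have h : (V.card : ℝ) ≤ 1 := by exact_mod_cast hsmallV
    nlinarith
  push_neg at hsmallV
  have hext : ∀ p ∈ V, Stmt14Aux.ι p ∈ Set.extremePoints ℝ
      (convexHull ℝ (Stmt14Aux.ι '' (V : Set (ℤ × ℤ)))) := hE
  have hnot := Stmt14Aux.not_mem_hull_rest V hext
  have H : ∀ p, p ∈ V → ∃ q, q ∈ V ∧ q ≠ p ∧ ∀ r ∈ V, r ≠ p → r ≠ q →
      0 < Stmt14Aux.crossZ (q - p) (r - p) := fun p hp =>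
    Stmt14Aux.exists_nxt V hnot p hp (by
      obtain ⟨b, hb, hbp⟩ := Finset.exists_mem_ne hsmallV p
      exact ⟨b, hb, hbp⟩)
  choose! nxt hmem hne h1 using H
  set nZ : ℤ := (n : ℤ) with hnZdef
  have hnZ0 : (0:ℤ) ≤ nZ := by positivity
  have hmem' : ∀ p ∈ V, nxt p ∈ V := hmem
  have hne' : ∀ p ∈ V, nxt p ≠ p := hne
  have h1' : ∀ p ∈ V, ∀ r ∈ V, r ≠ p → r ≠ nxt p →
      0 < Stmt14Aux.crossZ (nxt p - p) (r - p) := fun p hp r hr hrp hrn => h1 p hp r hr hrp hrn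
  have hbox' : ∀ p ∈ V, 0 ≤ p.1 ∧ p.1 ≤ nZ ∧ 0 ≤ p.2 ∧ p.2 ≤ nZ := hbox
  have htotal := Stmt14Aux.bound_total nZ V nxt hnZ0 hmem' hne' h1' hbox'
  -- primitive parts
  have HP : ∀ p, p ∈ V → ∃ wg : (ℤ × ℤ) × ℤ, 1 ≤ wg.2 ∧
      (nxt p - p).1 = wg.2 * wg.1.1 ∧ (nxt p - p).2 = wg.2 * wg.1.2 := by
    intro p hp
    have hd : nxt p - p ≠ 0 := sub_ne_zero.2 (hne' p hp)
    have hd' : (nxt p - p).1 ≠ 0 ∨ (nxt p - p).2 ≠ 0 := by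
      by_contra hcon
      push_neg at hcon
      exact hd (Prod.ext hcon.1 hcon.2)
    have hgpos : 0 < Int.gcd (nxt p - p).1 (nxt p - p).2 := Int.gcd_pos_iff.2 hd'
    refine ⟨(((nxt p - p).1 / (Int.gcd (nxt p - p).1 (nxt p - p).2 : ℤ),
             (nxt p - p).2 / (Int.gcd (nxt p - p).1 (nxt p - p).2 : ℤ)),
             (Int.gcd (nxt p - p).1 (nxt p - p).2 : ℤ)), ?_, ?_, ?_⟩
    · show (1:ℤ) ≤ ((Int.gcd (nxt p - p).1 (nxt p - p).2 : ℕ) : ℤ)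
      exact_mod_cast hgpos
    · exact (Int.mul_ediv_cancel' (Int.gcd_dvd_left _ _)).symm
    · exact (Int.mul_ediv_cancel' (Int.gcd_dvd_right _ _)).symm
  choose! wg hg1 hgA hgB using HP
  set w : ℤ × ℤ → ℤ × ℤ := fun p => (wg p).1 with hwdef
  set g : ℤ × ℤ → ℤ := fun p => (wg p).2 with hgdef
  have hgA' : ∀ p ∈ V, (nxt p).1 - p.1 = g p * (w p).1 := by
    intro p hp
    have h := hgA p hp
    simpa only [Prod.fst_sub] using h
  have hgB' : ∀ p ∈ V, (nxt p).2 - p.2 = g p * (w p).2 := by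
    intro p hp
    have h := hgB p hp
    simpa only [Prod.snd_sub] using h
  -- injectivity of w on V
  have hwinj : ∀ p ∈ V, ∀ p' ∈ V, w p = w p' → p = p' := by
    intro p hp p' hp' hww
    by_contra hpp'
    have EA1 := hgA' p hp
    have EA2 := hgB' p hp
    have EB1 := hgA' p' hp'
    have EB2 := hgB' p' hp'
    rw [← hww] at EB1 EB2
    have hgp : 1 ≤ g p := hg1 p hp
    have hgp' : 1 ≤ g p' := hg1 p' hp'
    by_cases hc1 : nxt p = p'
    · by_cases hc2 : nxt p' = p
      · -- opposite edges
        have hA1 : (nxt p').1 - p'.1 = -((nxt p).1 - p.1) := by rw [hc1, hc2]; ring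
        have hA2 : (nxt p').2 - p'.2 = -((nxt p).2 - p.2) := by rw [hc1, hc2]; ring
        have hW1 : (w p).1 = 0 := by
          have hsum : (g p + g p') * (w p).1 = 0 := by linarith [EA1, EB1, hA1]
          rcases mul_eq_zero.1 hsum with h | h
          · omega
          · exact h
        have hW2 : (w p).2 = 0 := by
          have hsum : (g p + g p') * (w p).2 = 0 := by linarith [EA2, EB2, hA2]
          rcases mul_eq_zero.1 hsum with h | h
          · omega
          · exact h
        apply hne' p hp
        apply Prod.ext
        · rw [hW1] at EA1; omega
        · rw [hW2] at EA2; omega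
      · -- q = p', q' ≠ p
        have hq'q : nxt p' ≠ nxt p := by
          intro h
          exact hne' p' hp' (by rw [h, hc1])
        have hcr := h1' p hp (nxt p') (hmem' p' hp') hc2 hq'q
        simp only [Stmt14Aux.crossZ, Prod.fst_sub, Prod.snd_sub] at hcr
        have l1 : (nxt p').1 - p.1 = g p' * (w p).1 + g p * (w p).1 := by
          have : (nxt p').1 - p.1 = ((nxt p').1 - p'.1) + ((nxt p).1 - p.1) := by rw [← hc1]; ring
          linarith [EB1, EA1]
        have l2 : (nxt p').2 - p.2 = g p' * (w p).2 + g p * (w p).2 := by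
          have : (nxt p').2 - p.2 = ((nxt p').2 - p'.2) + ((nxt p).2 - p.2) := by rw [← hc1]; ring
          linarith [EB2, EA2]
        have hzero : ((nxt p).1 - p.1) * ((nxt p').2 - p.2)
            - ((nxt p).2 - p.2) * ((nxt p').1 - p.1) = 0 := by
          rw [l1, l2, EA1, EA2]; ring
        linarith
    · by_cases hc2 : nxt p' = p
      · -- q' = p, q ≠ p'
        have hqq' : nxt p ≠ nxt p' := by
          intro h
          exact hne' p hp (by rw [h, hc2])
        have hcr := h1' p' hp' (nxt p) (hmem' p hp) hc1 hqq'
        simp only [Stmt14Aux.crossZ, Prod.fst_sub, Prod.snd_sub] at hcr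
        have l1 : (nxt p).1 - p'.1 = g p * (w p).1 + g p' * (w p).1 := by
          have : (nxt p).1 - p'.1 = ((nxt p).1 - p.1) + ((nxt p').1 - p'.1) := by rw [← hc2]; ring
          linarith [EB1, EA1]
        have l2 : (nxt p).2 - p'.2 = g p * (w p).2 + g p' * (w p).2 := by
          have : (nxt p).2 - p'.2 = ((nxt p).2 - p.2) + ((nxt p').2 - p'.2) := by rw [← hc2]; ring
          linarith [EB2, EA2]
        have hzero : ((nxt p').1 - p'.1) * ((nxt p).2 - p'.2)
            - ((nxt p').2 - p'.2) * ((nxt p).1 - p'.1) = 0 := by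
          rw [l1, l2, EB1, EB2]; ring
        linarith
      · -- generic
        have hcp1 := h1' p hp p' hp' (fun h => hpp' h.symm) (fun h => hc1 h.symm)
        have hcp2 := h1' p' hp' p hp hpp' (fun h => hc2 h.symm)
        simp only [Stmt14Aux.crossZ, Prod.fst_sub, Prod.snd_sub] at hcp1 hcp2
        rw [EA1, EA2] at hcp1
        rw [EB1, EB2] at hcp2
        have hgp0 : (0:ℤ) < g p := by omega
        have hgp0' : (0:ℤ) < g p' := by omega
        nlinarith [mul_pos hgp0' hcp1, mul_pos hgp0 hcp2]
  -- counting
  set tN : ℕ := ⌊x⌋₊ with htNdef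
  set t : ℤ := (tN : ℤ) with htdef
  have ht0 : (0:ℤ) ≤ t := by positivity
  set Ssmall := V.filter (fun p => |(w p).1| + |(w p).2| ≤ t) with hSsm
  set Sbig := V.filter (fun p => ¬ (|(w p).1| + |(w p).2| ≤ t)) with hSbg
  have hcardsplit : Ssmall.card + Sbig.card = V.card :=
    Finset.card_filter_add_card_filter_not _
  have hsmallbound : (Ssmall.card : ℤ) ≤ (2*t+1)^2 := by
    have hinj : Set.InjOn w Ssmall := fun a ha b hb hab =>
      hwinj a (Finset.mem_filter.1 ha).1 b (Finset.mem_filter.1 hb).1 hab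
    have hmaps : ∀ a ∈ Ssmall, w a ∈ Finset.Icc (-t) t ×ˢ Finset.Icc (-t) t := by
      intro a ha
      have h2 : |(w a).1| + |(w a).2| ≤ t := (Finset.mem_filter.1 ha).2
      have a1 := abs_nonneg (w a).1
      have a2 := abs_nonneg (w a).2
      rw [Finset.mem_product, Finset.mem_Icc, Finset.mem_Icc]
      exact ⟨abs_le.1 (by linarith), abs_le.1 (by linarith)⟩
    have hcle := Finset.card_le_card_of_injOn w hmaps hinj
    calc (Ssmall.card : ℤ) ≤ ((Finset.Icc (-t) t ×ˢ Finset.Icc (-t) t).card : ℤ) := by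
          exact_mod_cast hcle
      _ = (2*t+1)^2 := by
          rw [Finset.card_product, Int.card_Icc]
          have he : (t + 1 - -t).toNat = (2*t+1).toNat := by omega
          rw [he]
          push_cast [Int.toNat_of_nonneg (show (0:ℤ) ≤ 2*t+1 by omega)]
          ring
  have hbigbound : (Sbig.card : ℤ) * (t+1) ≤ 4 * nZ := by
    have hterm : ∀ p ∈ Sbig, t + 1 ≤ |(nxt p).1 - p.1| + |(nxt p).2 - p.2| := by
      intro p hpS
      have hp := (Finset.mem_filter.1 hpS).1
      have h2 : ¬ (|(w p).1| + |(w p).2| ≤ t) := (Finset.mem_filter.1 hpS).2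
      have EA1 := hgA' p hp
      have EA2 := hgB' p hp
      have hgp : 1 ≤ g p := hg1 p hp
      have k1 : |(w p).1| ≤ |(nxt p).1 - p.1| := by
        rw [EA1, abs_mul, abs_of_pos (by omega : (0:ℤ) < g p)]
        nlinarith [abs_nonneg (w p).1]
      have k2 : |(w p).2| ≤ |(nxt p).2 - p.2| := by
        rw [EA2, abs_mul, abs_of_pos (by omega : (0:ℤ) < g p)]
        nlinarith [abs_nonneg (w p).2]
      omega
    have hns := Finset.card_nsmul_le_sum Sbig _ (t+1) hterm
    rw [nsmul_eq_mul] at hns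
    have hsub : ∑ p ∈ Sbig, (|(nxt p).1 - p.1| + |(nxt p).2 - p.2|)
        ≤ ∑ p ∈ V, (|(nxt p).1 - p.1| + |(nxt p).2 - p.2|) :=
      Finset.sum_le_sum_of_subset_of_nonneg (Finset.filter_subset _ _)
        (fun i _ _ => by positivity)
    linarith
  -- real endgame
  have htx : (t : ℝ) ≤ x := by
    rw [htdef]
    push_cast
    exact Nat.floor_le (le_of_lt hx0)
  have htx1 : x < (t:ℝ) + 1 := by
    rw [htdef]
    push_cast
    exact Nat.lt_floor_add_one x
  have hS1 : (Ssmall.card : ℝ) ≤ 9 * x^2 := by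
    have h2 : (Ssmall.card : ℝ) ≤ (2*(t:ℝ)+1)^2 := by exact_mod_cast hsmallbound
    nlinarith
  have hS2 : (Sbig.card : ℝ) ≤ 4 * x^2 := by
    have h2 : (Sbig.card : ℝ) * ((t:ℝ)+1) ≤ 4 * (n:ℝ) := by exact_mod_cast hbigbound
    have hc0 : (0:ℝ) ≤ (Sbig.card : ℝ) := Nat.cast_nonneg _
    have h3 : (Sbig.card : ℝ) * x ≤ 4 * (n:ℝ) := by nlinarith
    rw [← hx3] at h3
    nlinarith
  have hVsplit : (V.card : ℝ) = (Ssmall.card : ℝ) + (Sbig.card : ℝ) := by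
    exact_mod_cast hcardsplit.symm
  rw [hVsplit, ← hx2]
  nlinarith
end

section
/- Let g₁, g₂ : ℝ² → ℝ be linear maps g_i(x) = u_i·x with u₁, u₂ ∈ ℤ² linearly independent, let h ∈ H ⊆ ℤ² be a finite set with g_i(h) = min over H of g_i and g_i(x) > g_i(h) for all x ∈ H∖{h} (i = 1,2), and suppose g_i(H∖{h}) − g_i(h) ⊆ [1, N+1] for i = 1,2. If f is a real polynomial with f(0) > Σ_{j=1}^{N+1}|f(j)|, then the polynomial p(x) = f(g₁(x)−g₁(h))·f(g₂(x)−g₂(h)) satisfies p(h) > Σ_{x∈H∖{h}} |p(x)|. -/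
theorem stmt15 (N : ℕ) (u₁ u₂ : ℤ × ℤ)
    (hind : u₁.1 * u₂.2 - u₁.2 * u₂.1 ≠ 0)
    (H : Finset (ℤ × ℤ)) (h : ℤ × ℤ) (hh : h ∈ H)
    (g₁ g₂ : ℤ × ℤ → ℤ)
    (hg₁ : ∀ x, g₁ x = u₁.1 * x.1 + u₁.2 * x.2)
    (hg₂ : ∀ x, g₂ x = u₂.1 * x.1 + u₂.2 * x.2)
    (hmin : ∀ x ∈ H, g₁ h ≤ g₁ x ∧ g₂ h ≤ g₂ x)
    (hstrict : ∀ x ∈ H, x ≠ h → g₁ h < g₁ x ∧ g₂ h < g₂ x)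
    (hrange : ∀ x ∈ H, x ≠ h →
      (1 ≤ g₁ x - g₁ h ∧ g₁ x - g₁ h ≤ (N : ℤ) + 1) ∧
      (1 ≤ g₂ x - g₂ h ∧ g₂ x - g₂ h ≤ (N : ℤ) + 1))
    (f : Polynomial ℝ)
    (hf : f.eval 0 > ∑ j ∈ Finset.Icc 1 (N + 1), |f.eval (j : ℝ)|) :
    f.eval ((g₁ h - g₁ h : ℤ) : ℝ) * f.eval ((g₂ h - g₂ h : ℤ) : ℝ) >
      ∑ x ∈ H.erase h,
        |f.eval ((g₁ x - g₁ h : ℤ) : ℝ) * f.eval ((g₂ x - g₂ h : ℤ) : ℝ)| := by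
  set T := ∑ j ∈ Finset.Icc 1 (N + 1), |f.eval (j : ℝ)| with hT
  have hT0 : 0 ≤ T := Finset.sum_nonneg fun _ _ => abs_nonneg _
  set φ : ℤ × ℤ → ℕ × ℕ := fun x => ((g₁ x - g₁ h).toNat, (g₂ x - g₂ h).toNat) with hφ
  have key : ∀ x ∈ H.erase h,
      |f.eval ((g₁ x - g₁ h : ℤ) : ℝ) * f.eval ((g₂ x - g₂ h : ℤ) : ℝ)| =
      |f.eval (((φ x).1 : ℕ) : ℝ)| * |f.eval (((φ x).2 : ℕ) : ℝ)| := by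
    intro x hx
    obtain ⟨hx1, hx2⟩ := Finset.mem_erase.mp hx
    obtain ⟨⟨h1, _⟩, ⟨h2, _⟩⟩ := hrange x hx2 hx1
    have e1 : (((g₁ x - g₁ h).toNat : ℤ)) = g₁ x - g₁ h := Int.toNat_of_nonneg (by linarith)
    have e2 : (((g₂ x - g₂ h).toNat : ℤ)) = g₂ x - g₂ h := Int.toNat_of_nonneg (by linarith)
    rw [abs_mul, hφ]
    congr 3
    · exact_mod_cast congrArg (fun z : ℤ => (z : ℝ)) e1.symm
    · exact_mod_cast congrArg (fun z : ℤ => (z : ℝ)) e2.symm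
  rw [Finset.sum_congr rfl key]
  have hinj : ∀ x ∈ H.erase h, ∀ y ∈ H.erase h, φ x = φ y → x = y := by
    intro x hx y hy hxy
    obtain ⟨hx1, hx2⟩ := Finset.mem_erase.mp hx
    obtain ⟨hy1, hy2⟩ := Finset.mem_erase.mp hy
    obtain ⟨⟨hx1', _⟩, ⟨hx2', _⟩⟩ := hrange x hx2 hx1
    obtain ⟨⟨hy1', _⟩, ⟨hy2', _⟩⟩ := hrange y hy2 hy1
    have e1 : g₁ x = g₁ y := by
      have := congrArg (fun p : ℕ × ℕ => (p.1 : ℤ)) hxy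
      simp only [hφ, Int.toNat_of_nonneg (by linarith : (0:ℤ) ≤ g₁ x - g₁ h),
        Int.toNat_of_nonneg (by linarith : (0:ℤ) ≤ g₁ y - g₁ h)] at this
      linarith
    have e2 : g₂ x = g₂ y := by
      have := congrArg (fun p : ℕ × ℕ => (p.2 : ℤ)) hxy
      simp only [hφ, Int.toNat_of_nonneg (by linarith : (0:ℤ) ≤ g₂ x - g₂ h),
        Int.toNat_of_nonneg (by linarith : (0:ℤ) ≤ g₂ y - g₂ h)] at this
      linarith
    rw [hg₁ x, hg₁ y] at e1
    rw [hg₂ x, hg₂ y] at e2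
    have d1 : (u₁.1 * u₂.2 - u₁.2 * u₂.1) * (x.1 - y.1) = 0 := by ring_nf; linear_combination u₂.2 * e1 - u₁.2 * e2
    have d2 : (u₁.1 * u₂.2 - u₁.2 * u₂.1) * (x.2 - y.2) = 0 := by ring_nf; linear_combination u₁.1 * e2 - u₂.1 * e1
    have : x.1 = y.1 := by
      rcases mul_eq_zero.mp d1 with hc | hc
      · exact absurd hc hind
      · linarith
    have : x.2 = y.2 := by
      rcases mul_eq_zero.mp d2 with hc | hc
      · exact absurd hc hind
      · linarith
    exact Prod.ext ‹x.1 = y.1› ‹x.2 = y.2›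
  rw [show (∑ x ∈ H.erase h, |f.eval (((φ x).1 : ℕ) : ℝ)| * |f.eval (((φ x).2 : ℕ) : ℝ)|) =
      ∑ p ∈ (H.erase h).image φ, |f.eval ((p.1 : ℕ) : ℝ)| * |f.eval ((p.2 : ℕ) : ℝ)| from
      (Finset.sum_image (f := fun p : ℕ × ℕ => |f.eval ((p.1 : ℕ) : ℝ)| * |f.eval ((p.2 : ℕ) : ℝ)|) hinj).symm]
  have hsub : (H.erase h).image φ ⊆ Finset.Icc 1 (N + 1) ×ˢ Finset.Icc 1 (N + 1) := by
    intro p hp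
    obtain ⟨x, hx, rfl⟩ := Finset.mem_image.mp hp
    obtain ⟨hx1, hx2⟩ := Finset.mem_erase.mp hx
    obtain ⟨⟨h1, h1'⟩, ⟨h2, h2'⟩⟩ := hrange x hx2 hx1
    simp only [Finset.mem_product, Finset.mem_Icc, hφ]
    omega
  have step1 : ∑ p ∈ (H.erase h).image φ, |f.eval ((p.1 : ℕ) : ℝ)| * |f.eval ((p.2 : ℕ) : ℝ)| ≤
      ∑ p ∈ Finset.Icc 1 (N + 1) ×ˢ Finset.Icc 1 (N + 1),
        |f.eval ((p.1 : ℕ) : ℝ)| * |f.eval ((p.2 : ℕ) : ℝ)| :=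
    Finset.sum_le_sum_of_subset_of_nonneg hsub
      (fun _ _ _ => mul_nonneg (abs_nonneg _) (abs_nonneg _))
  have step2 : ∑ p ∈ Finset.Icc 1 (N + 1) ×ˢ Finset.Icc 1 (N + 1),
      |f.eval ((p.1 : ℕ) : ℝ)| * |f.eval ((p.2 : ℕ) : ℝ)| = T * T := by
    rw [Finset.sum_product, hT, Finset.sum_mul]
    exact Finset.sum_congr rfl fun i _ => by simp [Finset.mul_sum]
  have hlhs : f.eval ((g₁ h - g₁ h : ℤ) : ℝ) * f.eval ((g₂ h - g₂ h : ℤ) : ℝ) =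
      f.eval 0 * f.eval 0 := by norm_num
  rw [hlhs]
  calc ∑ p ∈ (H.erase h).image φ, |f.eval ((p.1 : ℕ) : ℝ)| * |f.eval ((p.2 : ℕ) : ℝ)|
      ≤ T * T := step2 ▸ step1
    _ < f.eval 0 * f.eval 0 := mul_lt_mul'' hf hf hT0 hT0
end

section
/- Let d ≥ 2, and let f₀, f₁, …, f_{d−1} be real univariate functions and g₀, …, g_{d−1} : ℝ^d → ℝ linear maps such that the map x ↦ (g₀(x),…,g_{d−1}(x)) is injective. Let H ⊆ ℝ^d be finite and suppose g₀(H) ⊆ ℤ and for each k ∈ ℤ and 1 ≤ i ≤ d−1 there is ε_{ik} ∈ (−1/2, 1/2] with g_i(H ∩ g₀^{−1}(k)) ⊆ ℤ + ε_{ik}. Then Σ_{x∈H} ∏_{i=0}^{d−1}|f_i(g_i(x))| ≤ Σ_{k∈g₀(H)} |f₀(k)| · ∏_{i=1}^{d−1} Σ_{j∈ℤ} |f_i(j + ε_{ik})|, provided the right-hand sums converge. -/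
lemma aux19 {ι : Type*} [DecidableEq ι] (h : ι → ℤ → ℝ)
    (hpos : ∀ i j, 0 ≤ h i j) (s : Finset ι)
    (hsum : ∀ i ∈ s, Summable (h i)) :
    ∀ T : Finset (ι → ℤ),
      (∀ t ∈ T, ∀ u ∈ T, (∀ i ∈ s, t i = u i) → t = u) →
      ∑ t ∈ T, ∏ i ∈ s, h i (t i) ≤ ∏ i ∈ s, ∑' j, h i j := by
  classical
  induction s using Finset.induction with
  | empty =>
    intro T hinj
    simp only [Finset.prod_empty, Finset.sum_const, nsmul_eq_mul, mul_one]
    have : T.card ≤ 1 := by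
      refine Finset.card_le_one.2 fun t ht u hu => hinj t ht u hu (by simp)
    exact_mod_cast this
  | @insert a s ha ih =>
    intro T hinj
    have hsums : ∀ i ∈ s, Summable (h i) := fun i hi => hsum i (Finset.mem_insert_of_mem hi)
    have hsa : Summable (h a) := hsum a (Finset.mem_insert_self a s)
    rw [Finset.prod_insert ha]
    have key : ∑ t ∈ T, ∏ i ∈ insert a s, h i (t i)
        = ∑ j ∈ T.image (fun t => t a), ∑ t ∈ T.filter (fun t => t a = j),
            ∏ i ∈ insert a s, h i (t i) := by
      exact (Finset.sum_fiberwise_of_maps_to (fun t ht => Finset.mem_image_of_mem _ ht) _).symm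
    rw [key]
    have step : ∀ j ∈ T.image (fun t => t a),
        ∑ t ∈ T.filter (fun t => t a = j), ∏ i ∈ insert a s, h i (t i)
        ≤ h a j * ∏ i ∈ s, ∑' j', h i j' := by
      intro j hj
      have : ∑ t ∈ T.filter (fun t => t a = j), ∏ i ∈ insert a s, h i (t i)
          = h a j * ∑ t ∈ T.filter (fun t => t a = j), ∏ i ∈ s, h i (t i) := by
        rw [Finset.mul_sum]
        refine Finset.sum_congr rfl fun t ht => ?_
        rw [Finset.prod_insert ha, (Finset.mem_filter.1 ht).2]
      rw [this]
      refine mul_le_mul_of_nonneg_left ?_ (hpos a j)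
      refine ih hsums _ fun t ht u hu he => ?_
      have ht' := Finset.mem_filter.1 ht
      have hu' := Finset.mem_filter.1 hu
      refine hinj t ht'.1 u hu'.1 fun i hi => ?_
      rcases Finset.mem_insert.1 hi with rfl | hi
      · rw [ht'.2, hu'.2]
      · exact he i hi
    calc ∑ j ∈ T.image (fun t => t a), ∑ t ∈ T.filter (fun t => t a = j),
            ∏ i ∈ insert a s, h i (t i)
        ≤ ∑ j ∈ T.image (fun t => t a), h a j * ∏ i ∈ s, ∑' j', h i j' :=
          Finset.sum_le_sum step
      _ = (∑ j ∈ T.image (fun t => t a), h a j) * ∏ i ∈ s, ∑' j', h i j' :=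
          (Finset.sum_mul _ _ _).symm
      _ ≤ (∑' j, h a j) * ∏ i ∈ s, ∑' j', h i j' := by
          refine mul_le_mul_of_nonneg_right ?_ ?_
          · exact Summable.sum_le_tsum _ (fun j _ => hpos a j) hsa
          · exact Finset.prod_nonneg fun i _ => tsum_nonneg (fun j => hpos i j)

theorem stmt19 (d : ℕ) (hd : 2 ≤ d)
    (i₀ : Fin d) (hi₀ : (i₀ : ℕ) = 0)
    (f : Fin d → ℝ → ℝ)
    (g : Fin d → (Fin d → ℝ) → ℝ)
    (hlin : ∀ i, IsLinearMap ℝ (g i))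
    (hinj : Function.Injective (fun x : Fin d → ℝ => fun i => g i x))
    (H : Finset (Fin d → ℝ))
    (hint : ∀ x ∈ H, ∃ z : ℤ, g i₀ x = (z : ℝ))
    (ε : Fin d → ℝ → ℝ)
    (hε : ∀ i, i ≠ i₀ → ∀ k : ℝ, ε i k ∈ Set.Ioc (-(1 / 2) : ℝ) (1 / 2))
    (hshift : ∀ x ∈ H, ∀ i, i ≠ i₀ → ∃ z : ℤ, g i x = (z : ℝ) + ε i (g i₀ x))
    (hsum : ∀ i, i ≠ i₀ → ∀ k : ℝ, Summable (fun j : ℤ => |f i ((j : ℝ) + ε i k)|)) :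
    ∑ x ∈ H, ∏ i, |f i (g i x)| ≤
      ∑ k ∈ H.image (g i₀),
        |f i₀ k| * ∏ i ∈ Finset.univ.erase i₀, ∑' j : ℤ, |f i ((j : ℝ) + ε i k)| := by
  classical
  rw [← Finset.sum_fiberwise_of_maps_to (fun x hx => Finset.mem_image_of_mem (g i₀) hx)
    (fun x => ∏ i, |f i (g i x)|)]
  refine Finset.sum_le_sum fun k hk => ?_
  -- fiber S
  set S := H.filter (fun x => g i₀ x = k) with hS
  -- choose integer coordinates
  have hmemS : ∀ x ∈ S, x ∈ H ∧ g i₀ x = k := fun x hx => Finset.mem_filter.1 hx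
  -- define z : for x ∈ S, integer tuple
  have hz : ∀ x ∈ S, ∀ i, i ≠ i₀ → ∃ z : ℤ, g i x = (z : ℝ) + ε i k := by
    intro x hx i hi
    obtain ⟨z, hz⟩ := hshift x (hmemS x hx).1 i hi
    exact ⟨z, by rw [hz, (hmemS x hx).2]⟩
  -- build the tuple map
  let zmap : (Fin d → ℝ) → (Fin d → ℤ) := fun x i =>
    if h : x ∈ S ∧ i ≠ i₀ then (hz x h.1 i h.2).choose else 0
  have hzmap : ∀ x ∈ S, ∀ i, i ≠ i₀ → g i x = (zmap x i : ℝ) + ε i k := by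
    intro x hx i hi
    have : zmap x i = (hz x hx i hi).choose := dif_pos ⟨hx, hi⟩
    rw [this]
    exact (hz x hx i hi).choose_spec
  -- split product
  have hsplit : ∀ x ∈ S, ∏ i, |f i (g i x)|
      = |f i₀ k| * ∏ i ∈ Finset.univ.erase i₀, |f i ((zmap x i : ℝ) + ε i k)| := by
    intro x hx
    rw [← Finset.mul_prod_erase Finset.univ _ (Finset.mem_univ i₀), (hmemS x hx).2]
    congr 1
    refine Finset.prod_congr rfl fun i hi => ?_
    rw [hzmap x hx i (Finset.mem_erase.1 hi).1]
  calc ∑ x ∈ S, ∏ i, |f i (g i x)|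
      = ∑ x ∈ S, |f i₀ k| * ∏ i ∈ Finset.univ.erase i₀, |f i ((zmap x i : ℝ) + ε i k)| :=
        Finset.sum_congr rfl hsplit
    _ = |f i₀ k| * ∑ x ∈ S, ∏ i ∈ Finset.univ.erase i₀, |f i ((zmap x i : ℝ) + ε i k)| :=
        (Finset.mul_sum _ _ _).symm
    _ ≤ |f i₀ k| * ∏ i ∈ Finset.univ.erase i₀, ∑' j : ℤ, |f i ((j : ℝ) + ε i k)| := by
        refine mul_le_mul_of_nonneg_left ?_ (abs_nonneg _)
        -- rewrite as sum over image
        have himg : Set.InjOn zmap S := by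
          intro x hx y hy hxy
          simp only [Finset.mem_coe] at hx hy
          apply hinj
          funext i
          by_cases hi : i = i₀
          · subst hi; simp only
            rw [(hmemS x hx).2, (hmemS y hy).2]
          · simp only
            rw [hzmap x hx i hi, hzmap y hy i hi, congrFun hxy i]
        have heq : ∑ t ∈ S.image zmap, ∏ i ∈ Finset.univ.erase i₀, |f i ((t i : ℝ) + ε i k)|
            = ∑ x ∈ S, ∏ i ∈ Finset.univ.erase i₀, |f i ((zmap x i : ℝ) + ε i k)| :=
          Finset.sum_image (by exact fun x hx y hy h => himg hx hy h)
        rw [← heq]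
        refine aux19 (fun i j => |f i ((j : ℝ) + ε i k)|) (fun i j => abs_nonneg _) _
          (fun i hi => hsum i (Finset.mem_erase.1 hi).1 k) _ ?_
        intro t ht u hu he
        obtain ⟨x, hx, rfl⟩ := Finset.mem_image.1 ht
        obtain ⟨y, hy, rfl⟩ := Finset.mem_image.1 hu
        have : x = y := by
          apply hinj
          funext i
          by_cases hi : i = i₀
          · subst hi; simp only
            rw [(hmemS x hx).2, (hmemS y hy).2]
          · simp only
            rw [hzmap x hx i hi, hzmap y hy i hi,
              he i (Finset.mem_erase.2 ⟨hi, Finset.mem_univ i⟩)]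
        rw [this]
end
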